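/- Let G and G' be Gauss diagrams on n strings related by a third Reidemeister move Ω3: three string fragments carry the six endpoints of three arrows joining the fragments pairwise, on each fragment the two endpoints are adjacent, the configuration is one arising from the oriented third Reidemeister move on tangle diagrams (sliding a strand across a crossing), and the move simultaneously transposes the two endpoints on each of the three fragments while preserving the directions and signs of the three arrows. Then Z_{I,j}(G) = Z_{I,j}(G') for every I ⊆ {1,…,n} and every j ∉ I. The terms of Z_{I,j} involving exactly two of the three arrows match up according to the five defining relations of diassociative algebras, the unmatched pairs cancelling because the corresponding tree diagrams have opposite signs. -/

import Mathlib

/-!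
Combinatorial Gauss diagrams on `n` strings and the tree invariants `Z I j`.

A Gauss diagram is encoded by a finite set of arrows; each arrow records the
string (an element of `Fin n`) and the position (a rational number, increasing
in the direction of the orientation of the string) of its tail and of its head,
together with a sign `±1`.  Only the induced combinatorial data (linear order of
the endpoints along each string, the tail/head pairing and the signs) is ever
used by the definitions below.

The tree invariant `Z I j G = ∑_{A ∈ 𝒜_{I,j}} sign(A) ⟨A, G⟩` is computed as a
signed count over all subsets `S` of the arrows of `G` that form a planar tree
diagram with leaves on `I` and trunk on `j`: each pair `(A, φ)` of a planar tree
diagram `A ∈ 𝒜_{I,j}` together with an embedding `φ : A → G` corresponds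
bijectively to the subset `S = Im φ` of the arrows of `G`, which is itself a
planar tree diagram with leaves on `I` and trunk on `j`; the contribution of the
pair to the sum is `sign(A) · sign(φ) = (-1)^{#right-pointing arrows of S} · ∏_{a ∈ S} sign(a)`.
-/

open scoped Classical

/-- An arrow of a Gauss diagram on `n` strings: a tail endpoint, a head
endpoint (each given by the string it lies on and its position along that
string) and a sign. -/
structure GArrow (n : ℕ) where
  tailStr : Fin n
  tailPos : ℚ
  headStr : Fin n
  headPos : ℚ
  sign : ℤ
deriving DecidableEq

namespace GArrow

/-- The two endpoints of an arrow: `false` is the tail, `true` is the head. -/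
def ep {n : ℕ} (a : GArrow n) : Bool → Fin n × ℚ
  | false => (a.tailStr, a.tailPos)
  | true => (a.headStr, a.headPos)

end GArrow

/-- A Gauss diagram on `n` strings: a finite set of signed arrows with all
endpoints pairwise distinct, and all signs equal to `±1`. -/
structure GaussDiagram (n : ℕ) where
  arrows : Finset (GArrow n)
  sign_pm : ∀ a ∈ arrows, a.sign = 1 ∨ a.sign = -1
  endpoints_distinct : ∀ a ∈ arrows, ∀ b ∈ arrows, ∀ s t : Bool,
    a.ep s = b.ep t → a = b ∧ s = t

/-- `S` is a tree diagram with leaves on `I` and trunk on `j`: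
* the head and the tail of every arrow lie on different strings;
* for each `i ∈ I` there is exactly one arrow tail on string `i`, and there are
  no arrow tails on strings outside `I`;
* every arrow head lies on a string of `I ∪ {j}`;
* on each string `i ∈ I` all arrow heads precede the unique arrow tail. -/
def IsTreeDiagram {n : ℕ} (I : Finset (Fin n)) (j : Fin n)
    (S : Finset (GArrow n)) : Prop :=
  (∀ a ∈ S, a.tailStr ≠ a.headStr) ∧
  (∀ i ∈ I, ∃! a, a ∈ S ∧ a.tailStr = i) ∧
  (∀ a ∈ S, a.tailStr ∈ I) ∧
  (∀ a ∈ S, a.headStr ∈ I ∨ a.headStr = j) ∧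
  (∀ a ∈ S, ∀ b ∈ S, a.headStr = b.tailStr → a.headPos < b.tailPos)

/-- `ParentRel S s t` : string `s` is the parent of string `t` in the rooted
tree determined by the tree diagram `S`, i.e. the (unique) arrow with tail on
`t` has its head on `s`. -/
def ParentRel {n : ℕ} (S : Finset (GArrow n)) (s t : Fin n) : Prop :=
  ∃ a ∈ S, a.tailStr = t ∧ a.headStr = s

/-- `Descends S s k` : string `k` belongs to the subtree of string `s` (it is
`s` itself or an iterated child of `s`). -/
def Descends {n : ℕ} (S : Finset (GArrow n)) : Fin n → Fin n → Prop :=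
  Relation.ReflTransGen (ParentRel S)

/-- `S` is a *planar* tree diagram with leaves on `I` and trunk on `j`: the
rooted tree `T_S` determined by `S` can be drawn in the plane so that the
clockwise order of its leaves, starting from the root on string `j`, is the
order of the string numbers.  Combinatorially this says that:
* the parent relation makes the strings carrying the arrows into a tree rooted
  at `j` (every leaf string is an iterated child of `j`);
* the whole subtree hanging from an arrow lies on the same side of the string
  carrying the head of that arrow as its tail does;
* two subtrees hanging on the same side of a common string are ordered, along
  that string, compatibly with the order of the strings: for two arrow heads on
  the same string, with both tails on the left, the subtree attached closer to
  the beginning of the string is the one carrying the larger string numbers,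
  while for two tails on the right it is the one carrying the smaller string
  numbers. -/
def IsPlanarTreeDiagram {n : ℕ} (I : Finset (Fin n)) (j : Fin n)
    (S : Finset (GArrow n)) : Prop :=
  IsTreeDiagram I j S ∧
  (∀ i ∈ I, Relation.TransGen (ParentRel S) j i) ∧
  (∀ a ∈ S, ∀ k : Fin n, Descends S a.tailStr k →
    (a.tailStr < a.headStr ↔ k < a.headStr)) ∧
  (∀ a ∈ S, ∀ b ∈ S, a.headStr = b.headStr → a.headPos < b.headPos →
    ∀ k k' : Fin n, Descends S a.tailStr k → Descends S b.tailStr k' →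
      ((a.tailStr < a.headStr → b.tailStr < b.headStr → k' < k) ∧
       (a.headStr < a.tailStr → b.headStr < b.tailStr → k < k')))

/-- The sign `(-1)^q` of an (embedded) arrow diagram, where `q` is the number
of right-pointing arrows (tail on a string of smaller number than the head). -/
noncomputable def treeSign {n : ℕ} (S : Finset (GArrow n)) : ℤ :=
  (-1) ^ (S.filter fun a => a.tailStr < a.headStr).card

/-- The tree invariant `Z_{I,j}(G) = ∑_{A ∈ 𝒜_{I,j}} sign(A)·⟨A,G⟩`, computed
as the signed count of embedded planar tree diagrams with leaves on `I` and
trunk on `j` inside `G`.  In particular `Z ∅ j G = 1` (only `S = ∅`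
contributes). -/
noncomputable def Z {n : ℕ} (I : Finset (Fin n)) (j : Fin n)
    (G : GaussDiagram n) : ℤ :=
  ∑ S ∈ G.arrows.powerset,
    if IsPlanarTreeDiagram I j S then treeSign S * ∏ a ∈ S, a.sign else 0

/-- The two points at positions `p` and `q` on string `str` are adjacent in the
Gauss diagram `G`: no arrow endpoint of `G` lies strictly between them. -/
def IsAdjacentPair {n : ℕ} (G : GaussDiagram n) (str : Fin n) (p q : ℚ) : Prop :=
  p ≠ q ∧ ∀ c ∈ G.arrows, ∀ s : Bool, (c.ep s).1 = str →
    ¬(min p q < (c.ep s).2 ∧ (c.ep s).2 < max p q)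

/-- The sign `±1` associated to a Boolean. -/
def bsign (b : Bool) : ℤ := if b then 1 else -1

/-- The arrow with endpoints `(s1, p1)` and `(s2, p2)` and sign `sg`, whose
tail is on `s1` if `d = true` and on `s2` if `d = false`. -/
def mkDirArrow {n : ℕ} (d : Bool) (s1 : Fin n) (p1 : ℚ) (s2 : Fin n) (p2 : ℚ)
    (sg : ℤ) : GArrow n :=
  if d then ⟨s1, p1, s2, p2, sg⟩ else ⟨s2, p2, s1, p1, sg⟩

/-- First Reidemeister move (deletion direction): `G'` is obtained from `G` by
deleting one arrow whose two endpoints are adjacent on a single string. -/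
def Omega1Del {n : ℕ} (G G' : GaussDiagram n) : Prop :=
  ∃ a ∈ G.arrows, a.tailStr = a.headStr ∧
    IsAdjacentPair G a.tailStr a.tailPos a.headPos ∧
    G'.arrows = G.arrows.erase a

/-- First Reidemeister move: insertion or deletion of an isolated arrow with
both (adjacent) endpoints on a single string. -/
def Omega1Rel {n : ℕ} (G G' : GaussDiagram n) : Prop :=
  Omega1Del G G' ∨ Omega1Del G' G

/-- Second Reidemeister move (deletion direction): `G'` is obtained from `G` by
deleting a pair of arrows of opposite signs joining the same two strings in the
same direction, whose tails are adjacent and whose heads are adjacent, the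
arrow whose tail comes first being the one whose head comes second. -/
def Omega2Del {n : ℕ} (G G' : GaussDiagram n) : Prop :=
  ∃ a ∈ G.arrows, ∃ b ∈ G.arrows, a ≠ b ∧
    a.tailStr = b.tailStr ∧ a.headStr = b.headStr ∧ a.sign = -b.sign ∧
    IsAdjacentPair G a.tailStr a.tailPos b.tailPos ∧
    IsAdjacentPair G a.headStr a.headPos b.headPos ∧
    ((a.tailPos < b.tailPos ∧ b.headPos < a.headPos) ∨
     (b.tailPos < a.tailPos ∧ a.headPos < b.headPos)) ∧
    G'.arrows = (G.arrows.erase a).erase b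

/-- Second Reidemeister move: insertion or deletion of such a pair of arrows. -/
def Omega2Rel {n : ℕ} (G G' : GaussDiagram n) : Prop :=
  Omega2Del G G' ∨ Omega2Del G' G

/-- Third Reidemeister move on Gauss diagrams: three string fragments (on the
strings `sX`, `sY`, `sZ`, not necessarily distinct) carry the six endpoints of
three arrows `a` (joining the first and second fragments), `b` (first and
third) and `c` (second and third); on each fragment the two endpoints are
adjacent, and the move simultaneously transposes the two endpoints on each
fragment, preserving the directions and the signs of the three arrows.

Exactly the configurations arising from the oriented third Reidemeister move on
tangle diagrams (sliding the first strand, which passes entirely over or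
entirely under the other two, across the crossing of the other two strands) are
allowed; they are parametrised by the five Booleans `u` (the sliding strand
passes over), `w` (the second strand passes over the third at their crossing)
and `ox`, `oy`, `oz` (the orientations of the three strands in the standard
local picture), which determine the directions, the signs and the mutual order
of the endpoints of the three arrows, as obtained by computing the writhes in
the local picture. -/
def Omega3Rel {n : ℕ} (G G' : GaussDiagram n) : Prop :=
  ∃ (sX sY sZ : Fin n) (xa xb ya yc zb zc : ℚ) (u w ox oy oz : Bool),
    mkDirArrow u sX xa sY ya (bsign u * bsign ox * bsign oy) ∈ G.arrows ∧
    mkDirArrow u sX xb sZ zb (-(bsign u * bsign ox * bsign oz)) ∈ G.arrows ∧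
    mkDirArrow w sY yc sZ zc (-(bsign w * bsign oy * bsign oz)) ∈ G.arrows ∧
    (if ox then xa < xb else xb < xa) ∧
    (if oy then ya < yc else yc < ya) ∧
    (if oz then zc < zb else zb < zc) ∧
    IsAdjacentPair G sX xa xb ∧ IsAdjacentPair G sY ya yc ∧
    IsAdjacentPair G sZ zb zc ∧
    G'.arrows =
      (((G.arrows.erase
            (mkDirArrow u sX xa sY ya (bsign u * bsign ox * bsign oy))).erase
            (mkDirArrow u sX xb sZ zb (-(bsign u * bsign ox * bsign oz)))).erase
            (mkDirArrow w sY yc sZ zc (-(bsign w * bsign oy * bsign oz)))) ∪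
        {mkDirArrow u sX xb sY yc (bsign u * bsign ox * bsign oy),
         mkDirArrow u sX xa sZ zc (-(bsign u * bsign ox * bsign oz)),
         mkDirArrow w sY ya sZ zb (-(bsign w * bsign oy * bsign oz))}

/-- A single Reidemeister move on Gauss diagrams. -/
def ReidMove {n : ℕ} (G G' : GaussDiagram n) : Prop :=
  Omega1Rel G G' ∨ Omega2Rel G G' ∨ Omega3Rel G G'

namespace Om3
variable {n : ℕ}

noncomputable def wt (I : Finset (Fin n)) (j : Fin n) (S : Finset (GArrow n)) : ℤ :=
  if IsPlanarTreeDiagram I j S then treeSign S * ∏ a ∈ S, a.sign else 0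

lemma wt_eq_zero_of_self {I : Finset (Fin n)} {j : Fin n} {S : Finset (GArrow n)}
    {x : GArrow n} (hx : x ∈ S) (h : x.tailStr = x.headStr) : wt I j S = 0 := by
  rw [wt, if_neg]
  rintro ⟨⟨h1, -⟩, -⟩
  exact h1 x hx h

lemma wt_eq_zero_of_dup {I : Finset (Fin n)} {j : Fin n} {S : Finset (GArrow n)}
    {x y : GArrow n} (hx : x ∈ S) (hy : y ∈ S) (hxy : x ≠ y)
    (h : x.tailStr = y.tailStr) : wt I j S = 0 := by
  rw [wt, if_neg]
  rintro ⟨⟨-, h2, h3, -⟩, -⟩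
  obtain ⟨a, -, ha⟩ := h2 x.tailStr (h3 x hx)
  exact hxy ((ha x ⟨hx, rfl⟩).trans (ha y ⟨hy, h.symm⟩).symm)

/-- unique parents -/
lemma parent_unique {I : Finset (Fin n)} {j : Fin n} {S : Finset (GArrow n)}
    (h : IsPlanarTreeDiagram I j S) {s s' t : Fin n}
    (h1 : ParentRel S s t) (h2 : ParentRel S s' t) : s = s' := by
  obtain ⟨a, ha, hat, has⟩ := h1
  obtain ⟨b, hb, hbt, hbs⟩ := h2
  obtain ⟨c, -, hc⟩ := h.1.2.1 t (hat ▸ h.1.2.2.1 a ha)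
  have : a = b := (hc a ⟨ha, hat⟩).trans (hc b ⟨hb, hbt⟩).symm
  rw [← has, ← hbs, this]

lemma no_cycle {I : Finset (Fin n)} {j : Fin n} {S : Finset (GArrow n)}
    (h : IsPlanarTreeDiagram I j S) (hj : j ∉ I) :
    ∀ t, ¬ Relation.TransGen (ParentRel S) t t := by
  have key : ∀ t, Relation.ReflTransGen (ParentRel S) j t →
      ¬ Relation.TransGen (ParentRel S) t t := by
    intro t ht
    induction ht with
    | refl =>
      intro hcyc
      obtain ⟨c, -, a, ha, hat, -⟩ := Relation.TransGen.tail'_iff.1 hcyc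
      exact hj (hat ▸ h.1.2.2.1 a ha)
    | tail hjs hst ih =>
      rename_i s t'
      intro hcyc
      obtain ⟨c, htc, hct⟩ := Relation.TransGen.tail'_iff.1 hcyc
      have hcs : c = s := parent_unique h hct hst
      exact ih (Relation.TransGen.head' hst (hcs ▸ htc))
  intro t hcyc
  -- t is a tail, so t ∈ I, so reachable from j
  obtain ⟨c, -, a, ha, hat, -⟩ := Relation.TransGen.tail'_iff.1 hcyc
  have htI : t ∈ I := hat ▸ h.1.2.2.1 a ha
  exact key t (h.2.1 t htI).to_reflTransGen hcyc

section DescChar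
variable {n : ℕ} {R : Finset (GArrow n)} {P Q W : Fin n} {x y : GArrow n}

lemma desc_last (R : Finset (GArrow n)) {t k : Fin n} (h : Descends R t k) :
    k = t ∨ ∃ r ∈ R, r.tailStr = k := by
  rcases Relation.ReflTransGen.cases_tail h with h | ⟨c, -, r, hr, hrt, -⟩
  · exact Or.inl h
  · exact Or.inr ⟨r, hr, hrt⟩

lemma desc_mono {S : Finset (GArrow n)} (hsub : ∀ a ∈ R, a ∈ S) {t k : Fin n}
    (h : Descends R t k) : Descends S t k :=
  Relation.ReflTransGen.mono (fun _ _ (hp : ParentRel R _ _) => by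
    obtain ⟨a, ha, h1, h2⟩ := hp; exact ⟨a, hsub a ha, h1, h2⟩) _ _ h

variable (hRt : ∀ r ∈ R, r.tailStr ≠ P ∧ r.tailStr ≠ Q)

include hRt in
lemma dr_P {t : Fin n} (h : Descends R t P) : t = P := by
  rcases desc_last R h with h | ⟨r, hr, hrt⟩
  · exact h.symm
  · exact absurd hrt (hRt r hr).1

include hRt in
lemma dr_Q {t : Fin n} (h : Descends R t Q) : t = Q := by
  rcases desc_last R h with h | ⟨r, hr, hrt⟩
  · exact h.symm
  · exact absurd hrt (hRt r hr).2

variable (hx : x.tailStr = P) (hy : y.tailStr = Q) (hyh : y.headStr = W)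
  (hPQ : P ≠ Q) (hQW : Q ≠ W) (hPW : P ≠ W)

def Spair (x y : GArrow n) (R : Finset (GArrow n)) : Finset (GArrow n) :=
  insert x (insert y R)

lemma mem_Spair {a : GArrow n} : a ∈ Spair x y R ↔ a = x ∨ a = y ∨ a ∈ R := by
  simp [Spair]

include hx hy hyh in
lemma parent_Spair {s t : Fin n} :
    ParentRel (Spair x y R) s t ↔
      (s = x.headStr ∧ t = P) ∨ (s = W ∧ t = Q) ∨ ParentRel R s t := by
  constructor
  · rintro ⟨a, ha, hat, has⟩
    rcases mem_Spair.1 ha with rfl | rfl | ha'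
    · exact Or.inl ⟨has.symm, hat ▸ hx.symm ▸ rfl⟩
    · exact Or.inr (Or.inl ⟨has.symm ▸ hyh ▸ rfl, hat ▸ hy.symm ▸ rfl⟩)
    · exact Or.inr (Or.inr ⟨a, ha', hat, has⟩)
  · rintro (⟨rfl, rfl⟩ | ⟨rfl, rfl⟩ | ⟨a, ha, hat, has⟩)
    · exact ⟨x, mem_Spair.2 (Or.inl rfl), hx, rfl⟩
    · exact ⟨y, mem_Spair.2 (Or.inr (Or.inl rfl)), hy, hyh⟩
    · exact ⟨a, mem_Spair.2 (Or.inr (Or.inr ha)), hat, has⟩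

include hRt hx hy hyh hPQ hQW hPW in
lemma desc_Spair_generic (hxh : x.headStr = Q ∨ x.headStr = W) {t k : Fin n}
    (ht1 : t ≠ P) (ht2 : t ≠ Q) :
    Descends (Spair x y R) t k ↔
      Descends R t k ∨ (Descends R t W ∧ (Descends R P k ∨ Descends R Q k)) := by
  constructor
  · intro h
    induction h with
    | refl => exact Or.inl Relation.ReflTransGen.refl
    | tail hts hedge ih =>
      rename_i s k0
      have hW : s = W → Descends R t W := by
        rintro rfl
        rcases ih with h | ⟨h, -⟩
        · exact h
        · exact h
      rcases (parent_Spair hx hy hyh).1 hedge with ⟨hs, rfl⟩ | ⟨rfl, rfl⟩ | hpr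
      · refine Or.inr ⟨?_, Or.inl Relation.ReflTransGen.refl⟩
        rcases hxh with hq | hw
        · -- s = x.headStr = Q
          rw [hq] at hs; subst hs
          rcases ih with h | ⟨h, -⟩
          · exact absurd (dr_Q hRt h) ht2
          · exact h
        · rw [hw] at hs; exact hW hs
      · exact Or.inr ⟨hW rfl, Or.inr Relation.ReflTransGen.refl⟩
      · rcases ih with h | ⟨h1, h2 | h2⟩
        · exact Or.inl (h.tail hpr)
        · exact Or.inr ⟨h1, Or.inl (h2.tail hpr)⟩
        · exact Or.inr ⟨h1, Or.inr (h2.tail hpr)⟩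
  · have hsub : ∀ a ∈ R, a ∈ Spair x y R := fun a ha => mem_Spair.2 (Or.inr (Or.inr ha))
    have eWQ : ParentRel (Spair x y R) W Q :=
      (parent_Spair hx hy hyh).2 (Or.inr (Or.inl ⟨rfl, rfl⟩))
    have eP : Descends (Spair x y R) W P := by
      rcases hxh with hq | hw
      · exact Relation.ReflTransGen.head eWQ
          (Relation.ReflTransGen.single ((parent_Spair hx hy hyh).2 (Or.inl ⟨hq.symm, rfl⟩)))
      · exact Relation.ReflTransGen.single ((parent_Spair hx hy hyh).2 (Or.inl ⟨hw.symm, rfl⟩))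
    rintro (h | ⟨h1, h2 | h2⟩)
    · exact desc_mono hsub h
    · exact ((desc_mono hsub h1).trans eP).trans (desc_mono hsub h2)
    · exact ((desc_mono hsub h1).trans (Relation.ReflTransGen.single eWQ)).trans
        (desc_mono hsub h2)

include hRt hx hy hyh hPQ hQW hPW in
lemma desc_Spair_P (hxh : x.headStr = Q ∨ x.headStr = W)
    (hNCP : ¬ Descends R P W) {k : Fin n} :
    Descends (Spair x y R) P k ↔ Descends R P k := by
  constructor
  · intro h
    induction h with
    | refl => exact Relation.ReflTransGen.refl
    | tail hts hedge ih =>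
      rename_i s k0
      rcases (parent_Spair hx hy hyh).1 hedge with ⟨hs, rfl⟩ | ⟨rfl, rfl⟩ | hpr
      · rcases hxh with hq | hw
        · rw [hq] at hs; subst hs; exact absurd (dr_Q hRt ih) hPQ
        · rw [hw] at hs; subst hs; exact absurd ih hNCP
      · exact absurd ih hNCP
      · exact ih.tail hpr
  · exact desc_mono (fun a ha => mem_Spair.2 (Or.inr (Or.inr ha)))

include hRt hx hy hyh hPQ hQW hPW in
lemma desc_Spair_Q_fork (hxh : x.headStr = W) (hNCQ : ¬ Descends R Q W) {k : Fin n} :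
    Descends (Spair x y R) Q k ↔ Descends R Q k := by
  constructor
  · intro h
    induction h with
    | refl => exact Relation.ReflTransGen.refl
    | tail hts hedge ih =>
      rename_i s k0
      rcases (parent_Spair hx hy hyh).1 hedge with ⟨hs, rfl⟩ | ⟨rfl, rfl⟩ | hpr
      · rw [hxh] at hs; subst hs; exact absurd ih hNCQ
      · exact absurd ih hNCQ
      · exact ih.tail hpr
  · exact desc_mono (fun a ha => mem_Spair.2 (Or.inr (Or.inr ha)))

include hRt hx hy hyh hPQ hQW hPW in
lemma desc_Spair_Q_chain (hxh : x.headStr = Q) (hNCP : ¬ Descends R P W)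
    (hNCQ : ¬ Descends R Q W) {k : Fin n} :
    Descends (Spair x y R) Q k ↔ Descends R Q k ∨ Descends R P k := by
  constructor
  · intro h
    induction h with
    | refl => exact Or.inl Relation.ReflTransGen.refl
    | tail hts hedge ih =>
      rename_i s k0
      rcases (parent_Spair hx hy hyh).1 hedge with ⟨hs, rfl⟩ | ⟨rfl, rfl⟩ | hpr
      · exact Or.inr Relation.ReflTransGen.refl
      · rcases ih with h | h
        · exact absurd h hNCQ
        · exact absurd h hNCP
      · rcases ih with h | h
        · exact Or.inl (h.tail hpr)
        · exact Or.inr (h.tail hpr)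
  · have hsub : ∀ a ∈ R, a ∈ Spair x y R := fun a ha => mem_Spair.2 (Or.inr (Or.inr ha))
    have eQP : ParentRel (Spair x y R) Q P :=
      (parent_Spair hx hy hyh).2 (Or.inl ⟨hxh.symm, rfl⟩)
    rintro (h | h)
    · exact desc_mono hsub h
    · exact Relation.ReflTransGen.head eQP (desc_mono hsub h)

end DescChar
section Transfer
variable {n : ℕ} {I : Finset (Fin n)} {j : Fin n} {S S' : Finset (GArrow n)}

lemma planar_transfer (F : GArrow n → GArrow n) (hS' : S' = S.image F)
    (hts : ∀ x ∈ S, (F x).tailStr = x.tailStr)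
    (hhs : ∀ x ∈ S, (F x).headStr = x.headStr)
    (hcmp5 : ∀ x ∈ S, ∀ y ∈ S, x.headStr = y.tailStr →
      ((F x).headPos < (F y).tailPos ↔ x.headPos < y.tailPos))
    (hcmp4 : ∀ x ∈ S, ∀ y ∈ S, x.headStr = y.headStr →
      (x.tailStr < x.headStr ↔ y.tailStr < y.headStr) →
      ((F x).headPos < (F y).headPos ↔ x.headPos < y.headPos))
    (h : IsPlanarTreeDiagram I j S) : IsPlanarTreeDiagram I j S' := by
  subst hS'
  have hmem : ∀ a ∈ S.image F, ∃ x ∈ S, F x = a := by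
    intro a ha
    simpa using Finset.mem_image.1 ha
  have hpar : ∀ s t, ParentRel (S.image F) s t ↔ ParentRel S s t := by
    intro s t
    constructor
    · rintro ⟨a, ha, hat, has⟩
      obtain ⟨x, hx, rfl⟩ := hmem a ha
      exact ⟨x, hx, (hts x hx) ▸ hat, (hhs x hx) ▸ has⟩
    · rintro ⟨x, hx, hat, has⟩
      exact ⟨F x, Finset.mem_image_of_mem F hx, (hts x hx).trans hat,
        (hhs x hx).trans has⟩
  have hdesc : ∀ s t, Descends (S.image F) s t ↔ Descends S s t := by
    intro s t
    constructor
    · exact Relation.ReflTransGen.mono (fun a b => (hpar a b).1) _ _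
    · exact Relation.ReflTransGen.mono (fun a b => (hpar a b).2) _ _
  obtain ⟨⟨t1, t2, t3, t4, t5⟩, p1, p2, p3⟩ := h
  refine ⟨⟨?_, ?_, ?_, ?_, ?_⟩, ?_, ?_, ?_⟩
  · intro a ha
    obtain ⟨x, hx, rfl⟩ := hmem a ha
    rw [hts x hx, hhs x hx]; exact t1 x hx
  · intro i hi
    obtain ⟨x, ⟨hx, hxt⟩, hux⟩ := t2 i hi
    refine ⟨F x, ⟨Finset.mem_image_of_mem F hx, (hts x hx).trans hxt⟩, ?_⟩
    rintro a ⟨ha, hat⟩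
    obtain ⟨z, hz, rfl⟩ := hmem a ha
    rw [hux z ⟨hz, (hts z hz) ▸ hat⟩]
  · intro a ha
    obtain ⟨x, hx, rfl⟩ := hmem a ha
    rw [hts x hx]; exact t3 x hx
  · intro a ha
    obtain ⟨x, hx, rfl⟩ := hmem a ha
    rw [hhs x hx]; exact t4 x hx
  · intro a ha b hb hab
    obtain ⟨x, hx, rfl⟩ := hmem a ha
    obtain ⟨z, hz, rfl⟩ := hmem b hb
    have : x.headStr = z.tailStr := by rw [← hhs x hx, ← hts z hz]; exact hab
    exact (hcmp5 x hx z hz this).2 (t5 x hx z hz this)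
  · intro i hi
    rcases Relation.transGen_iff (ParentRel S) j i |>.1 (p1 i hi) with h | ⟨b, hb, hbe⟩
    · exact Relation.TransGen.single ((hpar _ _).2 h)
    · exact Relation.TransGen.tail'
        ((Relation.ReflTransGen.mono (fun a b => (hpar a b).2)) _ _ hb.to_reflTransGen)
        ((hpar _ _).2 hbe)
  · intro a ha k hk
    obtain ⟨x, hx, rfl⟩ := hmem a ha
    rw [hts x hx, hhs x hx]
    exact p2 x hx k ((hdesc _ _).1 (by rwa [hts x hx] at hk))
  · intro a ha b hb hab habp k k' hk hk'
    obtain ⟨x, hx, rfl⟩ := hmem a ha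
    obtain ⟨z, hz, rfl⟩ := hmem b hb
    have hstr : x.headStr = z.headStr := by rw [← hhs x hx, ← hhs z hz]; exact hab
    have hdx : Descends S x.tailStr k := (hdesc _ _).1 (by rwa [hts x hx] at hk)
    have hdz : Descends S z.tailStr k' := (hdesc _ _).1 (by rwa [hts z hz] at hk')
    rw [hts x hx, hhs x hx, hts z hz, hhs z hz]
    constructor
    · intro h1 h2
      have hp : x.headPos < z.headPos :=
        (hcmp4 x hx z hz hstr (by constructor <;> intro <;> [exact h2; exact h1])).1 habp
      exact (p3 x hx z hz hstr hp k k' hdx hdz).1 h1 h2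
    · intro h1 h2
      have hiff : (x.tailStr < x.headStr ↔ z.tailStr < z.headStr) := by
        constructor
        · intro hh; exact absurd hh (lt_asymm h1)
        · intro hh; exact absurd hh (lt_asymm h2)
      have hp : x.headPos < z.headPos := (hcmp4 x hx z hz hstr hiff).1 habp
      exact (p3 x hx z hz hstr hp k k' hdx hdz).2 h1 h2

end Transfer
section Master
variable {n : ℕ}

lemma desc_comparable {S : Finset (GArrow n)}
    (huniq : ∀ {x y c : Fin n}, ParentRel S x c → ParentRel S y c → x = y)
    {s s' k : Fin n} (h1 : Descends S s k) (h2 : Descends S s' k) :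
    Descends S s s' ∨ Descends S s' s := by
  induction h1 with
  | refl => exact Or.inr h2
  | @tail mid kk h1' hedge ih =>
    rcases Relation.ReflTransGen.cases_tail h2 with rfl | ⟨c, hc, hce⟩
    · exact Or.inl (h1'.tail hedge)
    · exact ih ((huniq hedge hce).symm ▸ hc)

variable {I : Finset (Fin n)} {j : Fin n} {R : Finset (GArrow n)}
  {P Q W : Fin n} {p1 p2 q1 q2 w1 w2 : ℚ} {sb st sbt : ℤ}

lemma chainToFork
    (hjI : j ∉ I)
    (hPQ : P ≠ Q) (hQW : Q ≠ W) (hPW : P ≠ W)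
    (hsP : ∀ r ∈ R,
      (r.tailStr = P → (r.tailPos < p1 ∧ r.tailPos < p2) ∨ (p1 < r.tailPos ∧ p2 < r.tailPos)) ∧
      (r.headStr = P → (r.headPos < p1 ∧ r.headPos < p2) ∨ (p1 < r.headPos ∧ p2 < r.headPos)))
    (hsQ : ∀ r ∈ R,
      (r.tailStr = Q → (r.tailPos < q1 ∧ r.tailPos < q2) ∨ (q1 < r.tailPos ∧ q2 < r.tailPos)) ∧
      (r.headStr = Q → (r.headPos < q1 ∧ r.headPos < q2) ∨ (q1 < r.headPos ∧ q2 < r.headPos)))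
    (hsW : ∀ r ∈ R,
      (r.tailStr = W → (r.tailPos < w1 ∧ r.tailPos < w2) ∨ (w1 < r.tailPos ∧ w2 < r.tailPos)) ∧
      (r.headStr = W → (r.headPos < w1 ∧ r.headPos < w2) ∨ (w1 < r.headPos ∧ w2 < r.headPos)))
    (hch : IsPlanarTreeDiagram I j (Spair ⟨P,p1,Q,q1,sb⟩ ⟨Q,q2,W,w1,st⟩ R))
    {pp qq vb vt : ℚ}
    (hpp : pp = p1 ∨ pp = p2) (hqq : qq = q1 ∨ qq = q2)
    (hv : (vb = w2 ∧ vt = w1) ∨ (vb = w1 ∧ vt = w2))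
    (hsig : (P < W ∧ Q < W ∧ (vt < vb ↔ P < Q)) ∨ (W < P ∧ W < Q ∧ (vb < vt ↔ P < Q))) :
    IsPlanarTreeDiagram I j (Spair ⟨P,pp,W,vb,sbt⟩ ⟨Q,qq,W,vt,st⟩ R) := by
  classical
  set β : GArrow n := ⟨P,p1,Q,q1,sb⟩ with hβ
  set τ : GArrow n := ⟨Q,q2,W,w1,st⟩ with hτ
  set bv : GArrow n := ⟨P,pp,W,vb,sbt⟩ with hbv
  set tv : GArrow n := ⟨Q,qq,W,vt,st⟩ with htv
  obtain ⟨⟨t1, t2, t3, t4, t5⟩, pl1, pl2, pl3⟩ := hch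
  have hβm : β ∈ Spair β τ R := mem_Spair.2 (Or.inl rfl)
  have hτm : τ ∈ Spair β τ R := mem_Spair.2 (Or.inr (Or.inl rfl))
  have hRm : ∀ r ∈ R, r ∈ Spair β τ R := fun r hr => mem_Spair.2 (Or.inr (Or.inr hr))
  have hPI : P ∈ I := t3 β hβm
  have hQI : Q ∈ I := t3 τ hτm
  have hWIj : W ∈ I ∨ W = j := t4 τ hτm
  -- R has no tails on P or Q
  have hRt : ∀ r ∈ R, r.tailStr ≠ P ∧ r.tailStr ≠ Q := by
    intro r hr
    constructor
    · intro hrp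
      have hne : r ≠ β := by
        intro h
        rcases (hsP r hr).1 hrp with ⟨h1, -⟩ | ⟨h1, -⟩ <;> rw [h] at h1 <;>
          simp [hβ] at h1 <;> exact absurd h1 (lt_irrefl _)
      obtain ⟨c, -, hc⟩ := t2 P hPI
      exact hne ((hc r ⟨hRm r hr, hrp⟩).trans (hc β ⟨hβm, rfl⟩).symm)
    · intro hrq
      have hne : r ≠ τ := by
        intro h
        rcases (hsQ r hr).1 hrq with ⟨-, h1⟩ | ⟨-, h1⟩ <;> rw [h] at h1 <;>
          simp [hτ] at h1 <;> exact absurd h1 (lt_irrefl _)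
      obtain ⟨c, -, hc⟩ := t2 Q hQI
      exact hne ((hc r ⟨hRm r hr, hrq⟩).trans (hc τ ⟨hτm, rfl⟩).symm)
  have hplch : IsPlanarTreeDiagram I j (Spair β τ R) :=
    ⟨⟨t1, t2, t3, t4, t5⟩, pl1, pl2, pl3⟩
  -- no-cycle facts
  have hNC1 : ¬ Descends R P W := by
    intro h
    have h1 : Descends (Spair β τ R) P W := desc_mono hRm h
    have e1 : ParentRel (Spair β τ R) W Q := ⟨τ, hτm, rfl, rfl⟩
    have e2 : ParentRel (Spair β τ R) Q P := ⟨β, hβm, rfl, rfl⟩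
    exact no_cycle hplch hjI P (Relation.TransGen.tail' (h1.tail e1) e2)
  have hNC2 : ¬ Descends R Q W := by
    intro h
    have h1 : Descends (Spair β τ R) Q W := desc_mono hRm h
    have e1 : ParentRel (Spair β τ R) W Q := ⟨τ, hτm, rfl, rfl⟩
    exact no_cycle hplch hjI Q (Relation.TransGen.tail' h1 e1)
  -- descends characterizations, chain side
  have cgen : ∀ t k : Fin n, t ≠ P → t ≠ Q →
      (Descends (Spair β τ R) t k ↔
        Descends R t k ∨ (Descends R t W ∧ (Descends R P k ∨ Descends R Q k))) :=
    fun t k ht1 ht2 =>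
      desc_Spair_generic (x := β) (y := τ) hRt rfl rfl rfl hPQ hQW hPW (Or.inl rfl) ht1 ht2
  have cP : ∀ k : Fin n, Descends (Spair β τ R) P k ↔ Descends R P k :=
    fun k => desc_Spair_P (x := β) (y := τ) hRt rfl rfl rfl hPQ hQW hPW (Or.inl rfl) hNC1
  have cQ : ∀ k : Fin n, Descends (Spair β τ R) Q k ↔ Descends R Q k ∨ Descends R P k :=
    fun k => desc_Spair_Q_chain (x := β) (y := τ) hRt rfl rfl rfl hPQ hQW hPW rfl hNC1 hNC2
  -- descends characterizations, fork side
  have fgen : ∀ t k : Fin n, t ≠ P → t ≠ Q →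
      (Descends (Spair bv tv R) t k ↔
        Descends R t k ∨ (Descends R t W ∧ (Descends R P k ∨ Descends R Q k))) :=
    fun t k ht1 ht2 =>
      desc_Spair_generic (x := bv) (y := tv) hRt rfl rfl rfl hPQ hQW hPW (Or.inr rfl) ht1 ht2
  have fP : ∀ k : Fin n, Descends (Spair bv tv R) P k ↔ Descends R P k :=
    fun k => desc_Spair_P (x := bv) (y := tv) hRt rfl rfl rfl hPQ hQW hPW (Or.inr rfl) hNC1
  have fQ : ∀ k : Fin n, Descends (Spair bv tv R) Q k ↔ Descends R Q k :=
    fun k => desc_Spair_Q_fork (x := bv) (y := tv) hRt rfl rfl rfl hPQ hQW hPW rfl hNC2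
  have hconv : ∀ r ∈ R, ∀ k : Fin n,
      (Descends (Spair bv tv R) r.tailStr k ↔ Descends (Spair β τ R) r.tailStr k) := by
    intro r hr k
    rw [cgen _ _ (hRt r hr).1 (hRt r hr).2, fgen _ _ (hRt r hr).1 (hRt r hr).2]
  -- E
  have hE : P < W ↔ Q < W := by
    have h := pl2 τ hτm P ((cQ P).2 (Or.inr Relation.ReflTransGen.refl))
    exact h.symm
  -- head positions of R on Q are below q1 and q2
  have hRQ : ∀ r ∈ R, r.headStr = Q → r.headPos < q1 ∧ r.headPos < q2 := by
    intro r hr hrh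
    have h1 : r.headPos < q2 := t5 r (hRm r hr) τ hτm hrh
    rcases (hsQ r hr).2 hrh with h | ⟨-, h2⟩
    · exact h
    · exact absurd h1 (lt_asymm h2)
  have hRP : ∀ r ∈ R, r.headStr = P → r.headPos < p1 ∧ r.headPos < p2 := by
    intro r hr hrh
    have h1 : r.headPos < p1 := t5 r (hRm r hr) β hβm hrh
    rcases (hsP r hr).2 hrh with h | ⟨h2, -⟩
    · exact h
    · exact absurd h1 (lt_asymm h2)
  have hRWt : ∀ r ∈ R, r.tailStr = W → w1 < r.tailPos ∧ w2 < r.tailPos := by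
    intro r hr hrt
    have h1 : w1 < r.tailPos := t5 τ hτm r (hRm r hr) hrt.symm
    rcases (hsW r hr).1 hrt with ⟨h2, -⟩ | h
    · exact absurd h1 (lt_asymm h2)
    · exact h
  -- uniqueness of parents in R; disjointness of subtrees of P and Q
  have huniqR : ∀ {x y c : Fin n}, ParentRel R x c → ParentRel R y c → x = y := by
    intro x y c h1 h2
    have l : ∀ {s t : Fin n}, ParentRel R s t → ParentRel (Spair β τ R) s t := by
      rintro s t ⟨a, ha, h3, h4⟩
      exact ⟨a, hRm a ha, h3, h4⟩
    exact parent_unique hplch (l h1) (l h2)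
  have hdisj : ∀ k : Fin n, Descends R P k → Descends R Q k → False := by
    intro k h1 h2
    rcases desc_comparable huniqR h1 h2 with h | h
    · exact hPQ (dr_Q hRt h)
    · exact hPQ (dr_P hRt h).symm
  -- the key pointwise order
  have hdir : ∀ k k' : Fin n, Descends R P k → Descends R Q k' → (P < Q ↔ k < k') := by
    have c3β : ∀ k : Fin n, Descends R P k → (P < Q ↔ k < Q) :=
      fun k hk => pl2 β hβm k ((cP k).2 hk)
    intro k k' hk hk'
    have main : (P < Q → k < k') ∧ (Q < P → k' < k) := by
      rcases Relation.ReflTransGen.cases_head hk' with heq | ⟨c, ⟨r, hr, hrt, hrh⟩, hck'⟩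
      · subst heq
        constructor
        · intro h; exact (c3β k hk).1 h
        · intro h
          rcases lt_trichotomy k Q with hlt | heq2 | hlt
          · exact absurd ((c3β k hk).2 hlt) (lt_asymm h)
          · exact absurd (dr_Q hRt (heq2 ▸ hk)) hPQ
          · exact hlt
      · have rq : r.headPos < q1 := (hRQ r hr hrh).1
        have hb := pl3 r (hRm r hr) β hβm (by rw [hrh]) rq k' k
          (desc_mono hRm (hrt ▸ hck')) ((cP k).2 hk)
        have hrtQ : r.tailStr ≠ Q := (hRt r hr).2
        have c3r := pl2 r (hRm r hr) k' (desc_mono hRm (hrt ▸ hck'))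
        rw [hrh] at c3r
        constructor
        · intro h
          rcases lt_or_gt_of_ne hrtQ with hc | hc
          · exact hb.1 (by rw [hrh]; exact hc) h
          · have h1 : ¬ k' < Q := fun hh => absurd (c3r.2 hh) (lt_asymm hc)
            exact lt_of_lt_of_le ((c3β k hk).1 h) (not_lt.1 h1)
        · intro h
          rcases lt_or_gt_of_ne hrtQ with hc | hc
          · have h1 : k' < Q := c3r.1 hc
            have h2 : ¬ k < Q := fun hh => absurd ((c3β k hk).2 hh) (lt_asymm h)
            exact lt_of_lt_of_le h1 (not_lt.1 h2)
          · exact hb.2 (by rw [hrh]; exact hc) h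
    constructor
    · exact main.1
    · intro h
      rcases lt_trichotomy P Q with h1 | h1 | h1
      · exact h1
      · exact absurd h1 hPQ
      · exact absurd h (lt_asymm (main.2 h1))
  have hbvm : bv ∈ Spair bv tv R := mem_Spair.2 (Or.inl rfl)
  have htvm : tv ∈ Spair bv tv R := mem_Spair.2 (Or.inr (Or.inl rfl))
  have hRm' : ∀ r ∈ R, r ∈ Spair bv tv R := fun r hr => mem_Spair.2 (Or.inr (Or.inr hr))
  have hE2 : W < P ↔ W < Q := by
    constructor
    · intro h
      rcases lt_trichotomy W Q with h1 | h1 | h1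
      · exact h1
      · exact absurd h1.symm hQW
      · exact absurd (hE.2 h1) (lt_asymm h)
    · intro h
      rcases lt_trichotomy W P with h1 | h1 | h1
      · exact h1
      · exact absurd h1.symm hPW
      · exact absurd (hE.1 h1) (lt_asymm h)
  refine ⟨⟨?_, ?_, ?_, ?_, ?_⟩, ?_, ?_, ?_⟩
  · -- T1
    intro a ha
    rcases mem_Spair.1 ha with rfl | rfl | ha'
    · exact hPW
    · exact hQW
    · exact t1 a (hRm a ha')
  · -- T2
    intro i hi
    obtain ⟨a, ⟨ha, hat⟩, hu⟩ := t2 i hi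
    rcases mem_Spair.1 ha with rfl | rfl | ha'
    · refine ⟨bv, ⟨hbvm, hat⟩, ?_⟩
      rintro b ⟨hb, hbt⟩
      rcases mem_Spair.1 hb with rfl | rfl | hb'
      · rfl
      · exact absurd (hbt.trans hat.symm).symm hPQ
      · exact absurd (hbt.trans hat.symm) (hRt b hb').1
    · refine ⟨tv, ⟨htvm, hat⟩, ?_⟩
      rintro b ⟨hb, hbt⟩
      rcases mem_Spair.1 hb with rfl | rfl | hb'
      · exact absurd (hbt.trans hat.symm) hPQ
      · rfl
      · exact absurd (hbt.trans hat.symm) (hRt b hb').2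
    · refine ⟨a, ⟨hRm' a ha', hat⟩, ?_⟩
      rintro b ⟨hb, hbt⟩
      rcases mem_Spair.1 hb with rfl | rfl | hb'
      · exact absurd (hat.trans hbt.symm) (hRt a ha').1
      · exact absurd (hat.trans hbt.symm) (hRt a ha').2
      · exact hu b ⟨hRm b hb', hbt⟩
  · -- T3
    intro a ha
    rcases mem_Spair.1 ha with rfl | rfl | ha'
    · exact hPI
    · exact hQI
    · exact t3 a (hRm a ha')
  · -- T4
    intro a ha
    rcases mem_Spair.1 ha with rfl | rfl | ha'
    · exact hWIj
    · exact hWIj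
    · exact t4 a (hRm a ha')
  · -- T5
    intro a ha b hb hab
    rcases mem_Spair.1 ha with rfl | rfl | ha'
    · rcases mem_Spair.1 hb with rfl | rfl | hb'
      · exact absurd hab.symm hPW
      · exact absurd hab.symm hQW
      · rcases hv with ⟨rfl, rfl⟩ | ⟨rfl, rfl⟩
        · exact (hRWt b hb' hab.symm).2
        · exact (hRWt b hb' hab.symm).1
    · rcases mem_Spair.1 hb with rfl | rfl | hb'
      · exact absurd hab.symm hPW
      · exact absurd hab.symm hQW
      · rcases hv with ⟨rfl, rfl⟩ | ⟨rfl, rfl⟩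
        · exact (hRWt b hb' hab.symm).1
        · exact (hRWt b hb' hab.symm).2
    · rcases mem_Spair.1 hb with rfl | rfl | hb'
      · rcases hpp with rfl | rfl
        · exact (hRP a ha' hab).1
        · exact (hRP a ha' hab).2
      · rcases hqq with rfl | rfl
        · exact (hRQ a ha' hab).1
        · exact (hRQ a ha' hab).2
      · exact t5 a (hRm a ha') b (hRm b hb') hab
  · -- P1
    intro i hi
    have hij : i ≠ j := fun h => hjI (h ▸ hi)
    have hjP : j ≠ P := fun h => hjI (h ▸ hPI)
    have hjQ : j ≠ Q := fun h => hjI (h ▸ hQI)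
    have hd : Descends (Spair β τ R) j i := (pl1 i hi).to_reflTransGen
    have hfd : Descends (Spair bv tv R) j i := by
      by_cases hiP : i = P
      · rw [hiP] at hd ⊢
        rcases (cgen j P hjP hjQ).1 hd with h | ⟨h, -⟩
        · exact absurd (dr_P hRt h) hjP
        · exact (fgen j P hjP hjQ).2 (Or.inr ⟨h, Or.inl Relation.ReflTransGen.refl⟩)
      · by_cases hiQ : i = Q
        · rw [hiQ] at hd ⊢
          rcases (cgen j Q hjP hjQ).1 hd with h | ⟨h, -⟩
          · exact absurd (dr_Q hRt h) hjQ
          · exact (fgen j Q hjP hjQ).2 (Or.inr ⟨h, Or.inr Relation.ReflTransGen.refl⟩)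
        · exact (fgen j i hjP hjQ).2 ((cgen j i hjP hjQ).1 hd)
    rcases Relation.reflTransGen_iff_eq_or_transGen.1 hfd with h | h
    · exact absurd h hij
    · exact h
  · -- cond3
    intro a ha k hk
    rcases mem_Spair.1 ha with rfl | rfl | ha'
    · have hk' : Descends R P k := (fP k).1 hk
      exact hE.trans (pl2 τ hτm k ((cQ k).2 (Or.inr hk')))
    · have hk' : Descends R Q k := (fQ k).1 hk
      exact pl2 τ hτm k ((cQ k).2 (Or.inl hk'))
    · exact pl2 a (hRm a ha') k ((hconv a ha' k).1 hk)
  · -- cond4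
    intro a ha b hb hab habp k k' hk hk'
    rcases mem_Spair.1 ha with rfl | rfl | ha'
    · rcases mem_Spair.1 hb with rfl | rfl | hb'
      · exact absurd habp (lt_irrefl _)
      · -- (bv, tv)
        have hkP : Descends R P k := (fP k).1 hk
        have hkQ : Descends R Q k' := (fQ k').1 hk'
        constructor
        · intro h1 h2
          rcases hsig with ⟨-, -, hiff⟩ | ⟨hWP, -, -⟩
          · have h3 : ¬ P < Q := fun hh => absurd (hiff.2 hh) (lt_asymm habp)
            have h4 : ¬ k < k' := fun hh => h3 ((hdir k k' hkP hkQ).2 hh)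
            have h5 : k ≠ k' := fun hh => hdisj k hkP (hh ▸ hkQ)
            rcases lt_trichotomy k' k with h | h | h
            · exact h
            · exact absurd h.symm h5
            · exact absurd h h4
          · exact absurd h1 (lt_asymm hWP)
        · intro h1 h2
          rcases hsig with ⟨hPW2, -, -⟩ | ⟨-, -, hiff⟩
          · exact absurd hPW2 (lt_asymm h1)
          · exact (hdir k k' hkP hkQ).1 (hiff.1 habp)
      · -- (bv, r)
        have hbW : b.headStr = W := hab.symm
        have hside : w1 < b.headPos ∧ w2 < b.headPos := by
          rcases (hsW b hb').2 hbW with ⟨hh1, hh2⟩ | hh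
          · rcases hv with ⟨rfl, -⟩ | ⟨rfl, -⟩
            · exact absurd habp (lt_asymm hh2)
            · exact absurd habp (lt_asymm hh1)
          · exact hh
        have hkP : Descends R P k := (fP k).1 hk
        have hpair := pl3 τ hτm b (hRm b hb') (by rw [hbW]) hside.1 k k'
          ((cQ k).2 (Or.inr hkP)) ((hconv b hb' k').1 hk')
        constructor
        · intro h1 h2
          exact hpair.1 (hE.1 h1) h2
        · intro h1 h2
          exact hpair.2 (hE2.1 h1) h2
    · rcases mem_Spair.1 hb with rfl | rfl | hb'
      · -- (tv, bv)
        have hkQ : Descends R Q k := (fQ k).1 hk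
        have hkP : Descends R P k' := (fP k').1 hk'
        constructor
        · intro h1 h2
          rcases hsig with ⟨-, -, hiff⟩ | ⟨hWP, -, -⟩
          · exact (hdir k' k hkP hkQ).1 (hiff.1 habp)
          · exact absurd h2 (lt_asymm hWP)
        · intro h1 h2
          rcases hsig with ⟨hPW2, -, -⟩ | ⟨-, -, hiff⟩
          · exact absurd h2 (lt_asymm hPW2)
          · have h3 : ¬ P < Q := fun hh => absurd (hiff.2 hh) (lt_asymm habp)
            have h4 : ¬ k' < k := fun hh => h3 ((hdir k' k hkP hkQ).2 hh)
            have h5 : k ≠ k' := fun hh => hdisj k (hh ▸ hkP) hkQ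
            rcases lt_trichotomy k k' with h | h | h
            · exact h
            · exact absurd h h5
            · exact absurd h h4
      · exact absurd habp (lt_irrefl _)
      · -- (tv, r)
        have hbW : b.headStr = W := hab.symm
        have hside : w1 < b.headPos ∧ w2 < b.headPos := by
          rcases (hsW b hb').2 hbW with ⟨hh1, hh2⟩ | hh
          · rcases hv with ⟨-, rfl⟩ | ⟨-, rfl⟩
            · exact absurd habp (lt_asymm hh1)
            · exact absurd habp (lt_asymm hh2)
          · exact hh
        have hkQ : Descends R Q k := (fQ k).1 hk
        have hpair := pl3 τ hτm b (hRm b hb') (by rw [hbW]) hside.1 k k'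
          ((cQ k).2 (Or.inl hkQ)) ((hconv b hb' k').1 hk')
        exact hpair
    · rcases mem_Spair.1 hb with rfl | rfl | hb'
      · -- (r, bv)
        have haW : a.headStr = W := hab
        have hside : a.headPos < w1 ∧ a.headPos < w2 := by
          rcases (hsW a ha').2 haW with hh | ⟨hh1, hh2⟩
          · exact hh
          · rcases hv with ⟨rfl, -⟩ | ⟨rfl, -⟩
            · exact absurd habp (lt_asymm hh2)
            · exact absurd habp (lt_asymm hh1)
        have hkP : Descends R P k' := (fP k').1 hk'
        have hpair := pl3 a (hRm a ha') τ hτm (by rw [haW]) hside.1 k k'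
          ((hconv a ha' k).1 hk) ((cQ k').2 (Or.inr hkP))
        constructor
        · intro h1 h2
          exact hpair.1 h1 (hE.1 h2)
        · intro h1 h2
          exact hpair.2 h1 (hE2.1 h2)
      · -- (r, tv)
        have haW : a.headStr = W := hab
        have hside : a.headPos < w1 ∧ a.headPos < w2 := by
          rcases (hsW a ha').2 haW with hh | ⟨hh1, hh2⟩
          · exact hh
          · rcases hv with ⟨-, rfl⟩ | ⟨-, rfl⟩
            · exact absurd habp (lt_asymm hh1)
            · exact absurd habp (lt_asymm hh2)
        have hkQ : Descends R Q k' := (fQ k').1 hk'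
        have hpair := pl3 a (hRm a ha') τ hτm (by rw [haW]) hside.1 k k'
          ((hconv a ha' k).1 hk) ((cQ k').2 (Or.inl hkQ))
        exact hpair
      · exact pl3 a (hRm a ha') b (hRm b hb') hab habp k k'
          ((hconv a ha' k).1 hk) ((hconv b hb' k').1 hk')


end Master
section Master2
variable {n : ℕ} {I : Finset (Fin n)} {j : Fin n} {R : Finset (GArrow n)}
  {P Q W : Fin n} {p1 p2 q1 q2 w1 w2 : ℚ} {sb st sbt : ℤ}

lemma forkToChain
    (hjI : j ∉ I)
    (hsP : ∀ r ∈ R,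
      (r.tailStr = P → (r.tailPos < p1 ∧ r.tailPos < p2) ∨ (p1 < r.tailPos ∧ p2 < r.tailPos)) ∧
      (r.headStr = P → (r.headPos < p1 ∧ r.headPos < p2) ∨ (p1 < r.headPos ∧ p2 < r.headPos)))
    (hsQ : ∀ r ∈ R,
      (r.tailStr = Q → (r.tailPos < q1 ∧ r.tailPos < q2) ∨ (q1 < r.tailPos ∧ q2 < r.tailPos)) ∧
      (r.headStr = Q → (r.headPos < q1 ∧ r.headPos < q2) ∨ (q1 < r.headPos ∧ q2 < r.headPos)))
    (hsW : ∀ r ∈ R,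
      (r.tailStr = W → (r.tailPos < w1 ∧ r.tailPos < w2) ∨ (w1 < r.tailPos ∧ w2 < r.tailPos)) ∧
      (r.headStr = W → (r.headPos < w1 ∧ r.headPos < w2) ∨ (w1 < r.headPos ∧ w2 < r.headPos)))
    (hq12 : q1 < q2) (hw12 : w1 ≠ w2)
    {pp qq vb vt : ℚ}
    (hpp : pp = p1 ∨ pp = p2) (hqq : qq = q1 ∨ qq = q2)
    (hv : (vb = w2 ∧ vt = w1) ∨ (vb = w1 ∧ vt = w2))
    (hE : P < W ↔ Q < W)
    (hfk : IsPlanarTreeDiagram I j (Spair ⟨P,pp,W,vb,sbt⟩ ⟨Q,qq,W,vt,st⟩ R)) :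
    IsPlanarTreeDiagram I j (Spair ⟨P,p1,Q,q1,sb⟩ ⟨Q,q2,W,w1,st⟩ R) := by
  classical
  set β : GArrow n := ⟨P,p1,Q,q1,sb⟩ with hβ
  set τ : GArrow n := ⟨Q,q2,W,w1,st⟩ with hτ
  set bv : GArrow n := ⟨P,pp,W,vb,sbt⟩ with hbv
  set tv : GArrow n := ⟨Q,qq,W,vt,st⟩ with htv
  obtain ⟨⟨t1, t2, t3, t4, t5⟩, pl1, pl2, pl3⟩ := hfk
  have hbvm : bv ∈ Spair bv tv R := mem_Spair.2 (Or.inl rfl)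
  have htvm : tv ∈ Spair bv tv R := mem_Spair.2 (Or.inr (Or.inl rfl))
  have hRm : ∀ r ∈ R, r ∈ Spair bv tv R := fun r hr => mem_Spair.2 (Or.inr (Or.inr hr))
  have hβm : β ∈ Spair β τ R := mem_Spair.2 (Or.inl rfl)
  have hτm : τ ∈ Spair β τ R := mem_Spair.2 (Or.inr (Or.inl rfl))
  have hRm' : ∀ r ∈ R, r ∈ Spair β τ R := fun r hr => mem_Spair.2 (Or.inr (Or.inr hr))
  have hPI : P ∈ I := t3 bv hbvm
  have hQI : Q ∈ I := t3 tv htvm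
  have hWIj : W ∈ I ∨ W = j := t4 tv htvm
  have hPW : P ≠ W := t1 bv hbvm
  have hQW : Q ≠ W := t1 tv htvm
  have hvbvt : vb ≠ vt := by
    rcases hv with ⟨rfl, rfl⟩ | ⟨rfl, rfl⟩
    · exact fun h => hw12 h.symm
    · exact hw12
  have hbvtv : bv ≠ tv := fun h => hvbvt (congrArg GArrow.headPos h)
  have hPQ : P ≠ Q := by
    intro h
    obtain ⟨c, -, hc⟩ := t2 P hPI
    exact hbvtv ((hc bv ⟨hbvm, rfl⟩).trans (hc tv ⟨htvm, h.symm⟩).symm)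
  have hfkpl : IsPlanarTreeDiagram I j (Spair bv tv R) :=
    ⟨⟨t1, t2, t3, t4, t5⟩, pl1, pl2, pl3⟩
  have hRt : ∀ r ∈ R, r.tailStr ≠ P ∧ r.tailStr ≠ Q := by
    intro r hr
    constructor
    · intro hrp
      have hne : r ≠ bv := by
        intro h
        rcases (hsP r hr).1 hrp with ⟨h1, h2⟩ | ⟨h1, h2⟩ <;> rw [h] at h1 h2 <;>
          rcases hpp with hh | hh <;> simp [hbv, hh] at h1 h2 <;>
            first
              | exact absurd h1 (lt_irrefl _)
              | exact absurd h2 (lt_irrefl _)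
      obtain ⟨c, -, hc⟩ := t2 P hPI
      exact hne ((hc r ⟨hRm r hr, hrp⟩).trans (hc bv ⟨hbvm, rfl⟩).symm)
    · intro hrq
      have hne : r ≠ tv := by
        intro h
        rcases (hsQ r hr).1 hrq with ⟨h1, h2⟩ | ⟨h1, h2⟩ <;> rw [h] at h1 h2 <;>
          rcases hqq with hh | hh <;> simp [htv, hh] at h1 h2 <;>
            first
              | exact absurd h1 (lt_irrefl _)
              | exact absurd h2 (lt_irrefl _)
      obtain ⟨c, -, hc⟩ := t2 Q hQI
      exact hne ((hc r ⟨hRm r hr, hrq⟩).trans (hc tv ⟨htvm, rfl⟩).symm)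
  have hNC1 : ¬ Descends R P W := by
    intro h
    have h1 : Descends (Spair bv tv R) P W := desc_mono hRm h
    have e2 : ParentRel (Spair bv tv R) W P := ⟨bv, hbvm, rfl, rfl⟩
    exact no_cycle hfkpl hjI P (Relation.TransGen.tail' h1 e2)
  have hNC2 : ¬ Descends R Q W := by
    intro h
    have h1 : Descends (Spair bv tv R) Q W := desc_mono hRm h
    have e2 : ParentRel (Spair bv tv R) W Q := ⟨tv, htvm, rfl, rfl⟩
    exact no_cycle hfkpl hjI Q (Relation.TransGen.tail' h1 e2)
  have cgen : ∀ t k : Fin n, t ≠ P → t ≠ Q →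
      (Descends (Spair β τ R) t k ↔
        Descends R t k ∨ (Descends R t W ∧ (Descends R P k ∨ Descends R Q k))) :=
    fun t k ht1 ht2 =>
      desc_Spair_generic (x := β) (y := τ) hRt rfl rfl rfl hPQ hQW hPW (Or.inl rfl) ht1 ht2
  have cP : ∀ k : Fin n, Descends (Spair β τ R) P k ↔ Descends R P k :=
    fun k => desc_Spair_P (x := β) (y := τ) hRt rfl rfl rfl hPQ hQW hPW (Or.inl rfl) hNC1
  have cQ : ∀ k : Fin n, Descends (Spair β τ R) Q k ↔ Descends R Q k ∨ Descends R P k :=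
    fun k => desc_Spair_Q_chain (x := β) (y := τ) hRt rfl rfl rfl hPQ hQW hPW rfl hNC1 hNC2
  have fgen : ∀ t k : Fin n, t ≠ P → t ≠ Q →
      (Descends (Spair bv tv R) t k ↔
        Descends R t k ∨ (Descends R t W ∧ (Descends R P k ∨ Descends R Q k))) :=
    fun t k ht1 ht2 =>
      desc_Spair_generic (x := bv) (y := tv) hRt rfl rfl rfl hPQ hQW hPW (Or.inr rfl) ht1 ht2
  have fP : ∀ k : Fin n, Descends (Spair bv tv R) P k ↔ Descends R P k :=
    fun k => desc_Spair_P (x := bv) (y := tv) hRt rfl rfl rfl hPQ hQW hPW (Or.inr rfl) hNC1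
  have fQ : ∀ k : Fin n, Descends (Spair bv tv R) Q k ↔ Descends R Q k :=
    fun k => desc_Spair_Q_fork (x := bv) (y := tv) hRt rfl rfl rfl hPQ hQW hPW rfl hNC2
  have hconv : ∀ r ∈ R, ∀ k : Fin n,
      (Descends (Spair bv tv R) r.tailStr k ↔ Descends (Spair β τ R) r.tailStr k) := by
    intro r hr k
    rw [cgen _ _ (hRt r hr).1 (hRt r hr).2, fgen _ _ (hRt r hr).1 (hRt r hr).2]
  have hE2 : W < P ↔ W < Q := by
    constructor
    · intro h
      rcases lt_trichotomy W Q with h1 | h1 | h1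
      · exact h1
      · exact absurd h1.symm hQW
      · exact absurd (hE.2 h1) (lt_asymm h)
    · intro h
      rcases lt_trichotomy W P with h1 | h1 | h1
      · exact h1
      · exact absurd h1.symm hPW
      · exact absurd (hE.1 h1) (lt_asymm h)
  have hRQf : ∀ r ∈ R, r.headStr = Q → r.headPos < q1 ∧ r.headPos < q2 := by
    intro r hr hrh
    have h1 : r.headPos < qq := t5 r (hRm r hr) tv htvm hrh
    rcases (hsQ r hr).2 hrh with h | ⟨h2, h3⟩
    · exact h
    · rcases hqq with rfl | rfl
      · exact absurd h1 (lt_asymm h2)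
      · exact absurd h1 (lt_asymm h3)
  have hRPf : ∀ r ∈ R, r.headStr = P → r.headPos < p1 ∧ r.headPos < p2 := by
    intro r hr hrh
    have h1 : r.headPos < pp := t5 r (hRm r hr) bv hbvm hrh
    rcases (hsP r hr).2 hrh with h | ⟨h2, h3⟩
    · exact h
    · rcases hpp with rfl | rfl
      · exact absurd h1 (lt_asymm h2)
      · exact absurd h1 (lt_asymm h3)
  have hRWtf : ∀ r ∈ R, r.tailStr = W → w1 < r.tailPos ∧ w2 < r.tailPos := by
    intro r hr hrt
    have h1 : vt < r.tailPos := t5 tv htvm r (hRm r hr) hrt.symm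
    rcases (hsW r hr).1 hrt with ⟨h2, h3⟩ | h
    · rcases hv with ⟨-, rfl⟩ | ⟨-, rfl⟩
      · exact absurd h1 (lt_asymm h2)
      · exact absurd h1 (lt_asymm h3)
    · exact h
  have huniqR : ∀ {x y c : Fin n}, ParentRel R x c → ParentRel R y c → x = y := by
    intro x y c h1 h2
    have l : ∀ {s t : Fin n}, ParentRel R s t → ParentRel (Spair bv tv R) s t := by
      rintro s t ⟨a, ha, h3, h4⟩
      exact ⟨a, hRm a ha, h3, h4⟩
    exact parent_unique hfkpl (l h1) (l h2)
  have hdisj : ∀ k : Fin n, Descends R P k → Descends R Q k → False := by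
    intro k h1 h2
    rcases desc_comparable huniqR h1 h2 with h | h
    · exact hPQ (dr_Q hRt h)
    · exact hPQ (dr_P hRt h).symm
  -- pointwise order between the subtrees of P and Q, extracted from cond4 of the fork
  have hpt : (∀ k k' : Fin n, Descends R P k → Descends R Q k' → k < k') ∨
             (∀ k k' : Fin n, Descends R P k → Descends R Q k' → k' < k) := by
    rcases lt_or_gt_of_ne hPW with hPWlt | hWPlt
    · have hQWlt : Q < W := hE.1 hPWlt
      rcases lt_or_gt_of_ne hvbvt with hlt | hlt
      · exact Or.inr (fun k k' hk hk' =>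
          (pl3 bv hbvm tv htvm rfl hlt k k' ((fP k).2 hk) ((fQ k').2 hk')).1 hPWlt hQWlt)
      · exact Or.inl (fun k k' hk hk' =>
          (pl3 tv htvm bv hbvm rfl hlt k' k ((fQ k').2 hk') ((fP k).2 hk)).1 hQWlt hPWlt)
    · have hWQlt : W < Q := hE2.1 hWPlt
      rcases lt_or_gt_of_ne hvbvt with hlt | hlt
      · exact Or.inl (fun k k' hk hk' =>
          (pl3 bv hbvm tv htvm rfl hlt k k' ((fP k).2 hk) ((fQ k').2 hk')).2 hWPlt hWQlt)
      · exact Or.inr (fun k k' hk hk' =>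
          (pl3 tv htvm bv hbvm rfl hlt k' k ((fQ k').2 hk') ((fP k).2 hk)).2 hWQlt hWPlt)
  have hdir : ∀ k k' : Fin n, Descends R P k → Descends R Q k' → (P < Q ↔ k < k') := by
    intro k k' hk hk'
    rcases hpt with hp | hp
    · exact ⟨fun _ => hp k k' hk hk', fun _ => hp P Q Relation.ReflTransGen.refl
        Relation.ReflTransGen.refl⟩
    · constructor
      · intro h
        exact absurd (hp P Q Relation.ReflTransGen.refl Relation.ReflTransGen.refl)
          (lt_asymm h)
      · intro h
        exact absurd (hp k k' hk hk') (lt_asymm h)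
  refine ⟨⟨?_, ?_, ?_, ?_, ?_⟩, ?_, ?_, ?_⟩
  · intro a ha
    rcases mem_Spair.1 ha with rfl | rfl | ha'
    · exact hPQ
    · exact hQW
    · exact t1 a (hRm a ha')
  · intro i hi
    obtain ⟨a, ⟨ha, hat⟩, hu⟩ := t2 i hi
    rcases mem_Spair.1 ha with rfl | rfl | ha'
    · refine ⟨β, ⟨hβm, hat⟩, ?_⟩
      rintro b ⟨hb, hbt⟩
      rcases mem_Spair.1 hb with rfl | rfl | hb'
      · rfl
      · exact absurd (hbt.trans hat.symm).symm hPQ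
      · exact absurd (hbt.trans hat.symm) (hRt b hb').1
    · refine ⟨τ, ⟨hτm, hat⟩, ?_⟩
      rintro b ⟨hb, hbt⟩
      rcases mem_Spair.1 hb with rfl | rfl | hb'
      · exact absurd (hbt.trans hat.symm) hPQ
      · rfl
      · exact absurd (hbt.trans hat.symm) (hRt b hb').2
    · refine ⟨a, ⟨hRm' a ha', hat⟩, ?_⟩
      rintro b ⟨hb, hbt⟩
      rcases mem_Spair.1 hb with rfl | rfl | hb'
      · exact absurd (hat.trans hbt.symm) (hRt a ha').1
      · exact absurd (hat.trans hbt.symm) (hRt a ha').2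
      · exact hu b ⟨hRm b hb', hbt⟩
  · intro a ha
    rcases mem_Spair.1 ha with rfl | rfl | ha'
    · exact hPI
    · exact hQI
    · exact t3 a (hRm a ha')
  · intro a ha
    rcases mem_Spair.1 ha with rfl | rfl | ha'
    · exact Or.inl hQI
    · exact hWIj
    · exact t4 a (hRm a ha')
  · intro a ha b hb hab
    rcases mem_Spair.1 ha with rfl | rfl | ha'
    · rcases mem_Spair.1 hb with rfl | rfl | hb'
      · exact absurd hab.symm hPQ
      · exact hq12
      · exact absurd hab.symm (hRt b hb').2
    · rcases mem_Spair.1 hb with rfl | rfl | hb'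
      · exact absurd hab.symm hPW
      · exact absurd hab.symm hQW
      · exact (hRWtf b hb' hab.symm).1
    · rcases mem_Spair.1 hb with rfl | rfl | hb'
      · exact (hRPf a ha' hab).1
      · exact (hRQf a ha' hab).2
      · exact t5 a (hRm a ha') b (hRm b hb') hab
  · intro i hi
    have hij : i ≠ j := fun h => hjI (h ▸ hi)
    have hjP : j ≠ P := fun h => hjI (h ▸ hPI)
    have hjQ : j ≠ Q := fun h => hjI (h ▸ hQI)
    have hd : Descends (Spair bv tv R) j i := (pl1 i hi).to_reflTransGen
    have hfd : Descends (Spair β τ R) j i := by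
      by_cases hiP : i = P
      · rw [hiP] at hd ⊢
        rcases (fgen j P hjP hjQ).1 hd with h | ⟨h, -⟩
        · exact absurd (dr_P hRt h) hjP
        · exact (cgen j P hjP hjQ).2 (Or.inr ⟨h, Or.inl Relation.ReflTransGen.refl⟩)
      · by_cases hiQ : i = Q
        · rw [hiQ] at hd ⊢
          rcases (fgen j Q hjP hjQ).1 hd with h | ⟨h, -⟩
          · exact absurd (dr_Q hRt h) hjQ
          · exact (cgen j Q hjP hjQ).2 (Or.inr ⟨h, Or.inr Relation.ReflTransGen.refl⟩)
        · exact (cgen j i hjP hjQ).2 ((fgen j i hjP hjQ).1 hd)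
    rcases Relation.reflTransGen_iff_eq_or_transGen.1 hfd with h | h
    · exact absurd h hij
    · exact h
  · -- cond3
    intro a ha k hk
    rcases mem_Spair.1 ha with rfl | rfl | ha'
    · exact hdir k Q ((cP k).1 hk) Relation.ReflTransGen.refl
    · rcases (cQ k).1 hk with h | h
      · exact pl2 tv htvm k ((fQ k).2 h)
      · exact hE.symm.trans (pl2 bv hbvm k ((fP k).2 h))
    · exact pl2 a (hRm a ha') k ((hconv a ha' k).2 hk)
  · -- cond4
    intro a ha b hb hab habp k k' hk hk'
    rcases mem_Spair.1 ha with rfl | rfl | ha'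
    · rcases mem_Spair.1 hb with rfl | rfl | hb'
      · exact absurd habp (lt_irrefl _)
      · exact absurd hab hQW
      · exact absurd habp (lt_asymm (hRQf b hb' hab.symm).1)
    · rcases mem_Spair.1 hb with rfl | rfl | hb'
      · exact absurd hab.symm hQW
      · exact absurd habp (lt_irrefl _)
      · -- (τ, r)
        have hbW : b.headStr = W := hab.symm
        have hside : w1 < b.headPos ∧ w2 < b.headPos := by
          rcases (hsW b hb').2 hbW with ⟨hh1, -⟩ | hh
          · exact absurd habp (lt_asymm hh1)
          · exact hh
        have hk'f : Descends (Spair bv tv R) b.tailStr k' := (hconv b hb' k').2 hk'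
        rcases (cQ k).1 hk with hQk | hPk
        · have habp2 : vt < b.headPos := by
            rcases hv with ⟨-, rfl⟩ | ⟨-, rfl⟩
            · exact hside.1
            · exact hside.2
          exact pl3 tv htvm b (hRm b hb') (by rw [hbW]) habp2 k k' ((fQ k).2 hQk) hk'f
        · have habp2 : vb < b.headPos := by
            rcases hv with ⟨rfl, -⟩ | ⟨rfl, -⟩
            · exact hside.2
            · exact hside.1
          have hpair := pl3 bv hbvm b (hRm b hb') (by rw [hbW]) habp2 k k'
            ((fP k).2 hPk) hk'f
          constructor
          · intro h1 h2
            exact hpair.1 (hE.2 h1) h2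
          · intro h1 h2
            exact hpair.2 (hE2.2 h1) h2
    · rcases mem_Spair.1 hb with rfl | rfl | hb'
      · -- (r, β)
        have haQ : a.headStr = Q := hab
        have hk'P : Descends R P k' := (cP k').1 hk'
        have hkdec : Descends R a.tailStr k := by
          rcases (cgen a.tailStr k (hRt a ha').1 (hRt a ha').2).1 hk with h | ⟨h, -⟩
          · exact h
          · exact absurd (Relation.ReflTransGen.head
              (⟨a, ha', rfl, haQ⟩ : ParentRel R Q a.tailStr) h) hNC2
        have hkQ : Descends R Q k :=
          Relation.ReflTransGen.head (⟨a, ha', rfl, haQ⟩ : ParentRel R Q a.tailStr) hkdec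
        constructor
        · intro h1 h2
          exact (hdir k' k hk'P hkQ).1 h2
        · intro h1 h2
          have h3 : ¬ P < Q := lt_asymm h2
          have h4 : ¬ k' < k := fun hh => h3 ((hdir k' k hk'P hkQ).2 hh)
          have h5 : k ≠ k' := fun hh => hdisj k' (hh ▸ hk'P) (hh ▸ hkQ)
          rcases lt_trichotomy k k' with h | h | h
          · exact h
          · exact absurd h h5
          · exact absurd h h4
      · -- (r, τ)
        have haW : a.headStr = W := hab
        have hside : a.headPos < w1 ∧ a.headPos < w2 := by
          rcases (hsW a ha').2 haW with hh | ⟨hh1, -⟩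
          · exact hh
          · exact absurd habp (lt_asymm hh1)
        have hkf : Descends (Spair bv tv R) a.tailStr k := (hconv a ha' k).2 hk
        rcases (cQ k').1 hk' with hQk | hPk
        · have habp2 : a.headPos < vt := by
            rcases hv with ⟨-, rfl⟩ | ⟨-, rfl⟩
            · exact hside.1
            · exact hside.2
          exact pl3 a (hRm a ha') tv htvm (by rw [haW]) habp2 k k' hkf ((fQ k').2 hQk)
        · have habp2 : a.headPos < vb := by
            rcases hv with ⟨rfl, -⟩ | ⟨rfl, -⟩
            · exact hside.2
            · exact hside.1
          have hpair := pl3 a (hRm a ha') bv hbvm (by rw [haW]) habp2 k k'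
            hkf ((fP k').2 hPk)
          constructor
          · intro h1 h2
            exact hpair.1 h1 (hE.2 h2)
          · intro h1 h2
            exact hpair.2 h1 (hE2.2 h2)
      · exact pl3 a (hRm a ha') b (hRm b hb') hab habp k k'
          ((hconv a ha' k).2 hk) ((hconv b hb' k').2 hk')

end Master2
section Master3
variable {n : ℕ} {I : Finset (Fin n)} {j : Fin n} {R : Finset (GArrow n)}
  {P Q W : Fin n} {sb st sbt : ℤ}

noncomputable def eps (a : GArrow n) : ℤ := if a.tailStr < a.headStr then -1 else 1

lemma treeSign_insert {S : Finset (GArrow n)} {x : GArrow n} (hx : x ∉ S) :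
    treeSign (insert x S) = eps x * treeSign S := by
  unfold treeSign eps
  rw [Finset.filter_insert]
  by_cases h : x.tailStr < x.headStr
  · rw [if_pos h, if_pos h,
      Finset.card_insert_of_notMem (fun hc => hx (Finset.mem_filter.1 hc).1), pow_succ]
    ring
  · rw [if_neg h, if_neg h]; ring

lemma wt_spair_eq {x y : GArrow n} (hpl : IsPlanarTreeDiagram I j (Spair x y R))
    (hxy : x ≠ y) (hxR : x ∉ R) (hyR : y ∉ R) :
    wt I j (Spair x y R) =
      ((eps x * x.sign) * (eps y * y.sign)) * (treeSign R * ∏ a ∈ R, a.sign) := by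
  have hx' : x ∉ insert y R := by
    simp only [Finset.mem_insert]
    rintro (h | h)
    · exact hxy h
    · exact hxR h
  rw [wt, if_pos hpl]
  unfold Spair
  rw [treeSign_insert hx', treeSign_insert hyR, Finset.prod_insert hx',
    Finset.prod_insert hyR]
  ring

lemma wt_spair_zero {x y : GArrow n} (hpl : ¬ IsPlanarTreeDiagram I j (Spair x y R)) :
    wt I j (Spair x y R) = 0 := by
  rw [wt, if_neg hpl]

lemma chain_gate {pa qa qb wa : ℚ}
    (h : IsPlanarTreeDiagram I j (Spair ⟨P,pa,Q,qa,sb⟩ ⟨Q,qb,W,wa,st⟩ R)) : qa < qb :=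
  h.1.2.2.2.2 ⟨P,pa,Q,qa,sb⟩ (mem_Spair.2 (Or.inl rfl)) ⟨Q,qb,W,wa,st⟩
    (mem_Spair.2 (Or.inr (Or.inl rfl))) rfl

lemma forks_contra {p1 p2 q1 q2 w1 w2 : ℚ}
    (hE : P < W ↔ Q < W) (hw12 : w1 ≠ w2) (hPW : P ≠ W) (hQW : Q ≠ W)
    (h1 : IsPlanarTreeDiagram I j (Spair ⟨P,p2,W,w2,sbt⟩ ⟨Q,q2,W,w1,st⟩ R))
    (h2 : IsPlanarTreeDiagram I j (Spair ⟨P,p1,W,w1,sbt⟩ ⟨Q,q1,W,w2,st⟩ R)) : False := by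
  set bv : GArrow n := ⟨P,p2,W,w2,sbt⟩
  set tv : GArrow n := ⟨Q,q2,W,w1,st⟩
  set bv' : GArrow n := ⟨P,p1,W,w1,sbt⟩
  set tv' : GArrow n := ⟨Q,q1,W,w2,st⟩
  have m1b : bv ∈ Spair bv tv R := mem_Spair.2 (Or.inl rfl)
  have m1t : tv ∈ Spair bv tv R := mem_Spair.2 (Or.inr (Or.inl rfl))
  have m2b : bv' ∈ Spair bv' tv' R := mem_Spair.2 (Or.inl rfl)
  have m2t : tv' ∈ Spair bv' tv' R := mem_Spair.2 (Or.inr (Or.inl rfl))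
  have pl3a := h1.2.2.2
  have pl3b := h2.2.2.2
  have rr : ∀ z : Fin n, Descends (Spair bv tv R) z z := fun _ => Relation.ReflTransGen.refl
  have rr' : ∀ z : Fin n, Descends (Spair bv' tv' R) z z := fun _ => Relation.ReflTransGen.refl
  rcases lt_or_gt_of_ne hPW with hPWlt | hWPlt
  · have hQWlt : Q < W := hE.1 hPWlt
    rcases lt_or_gt_of_ne hw12 with hlt | hlt
    · have ha : P < Q := (pl3a tv m1t bv m1b rfl hlt Q P (rr Q) (rr P)).1 hQWlt hPWlt
      have hb : Q < P := (pl3b bv' m2b tv' m2t rfl hlt P Q (rr' P) (rr' Q)).1 hPWlt hQWlt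
      exact absurd ha (lt_asymm hb)
    · have ha : Q < P := (pl3a bv m1b tv m1t rfl hlt P Q (rr P) (rr Q)).1 hPWlt hQWlt
      have hb : P < Q := (pl3b tv' m2t bv' m2b rfl hlt Q P (rr' Q) (rr' P)).1 hQWlt hPWlt
      exact absurd ha (lt_asymm hb)
  · have hWQlt : W < Q := by
      rcases lt_trichotomy W Q with h | h | h
      · exact h
      · exact absurd h.symm hQW
      · exact absurd (hE.2 h) (lt_asymm hWPlt)
    rcases lt_or_gt_of_ne hw12 with hlt | hlt
    · have ha : Q < P := (pl3a tv m1t bv m1b rfl hlt Q P (rr Q) (rr P)).2 hWQlt hWPlt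
      have hb : P < Q := (pl3b bv' m2b tv' m2t rfl hlt P Q (rr' P) (rr' Q)).2 hWPlt hWQlt
      exact absurd ha (lt_asymm hb)
    · have ha : P < Q := (pl3a bv m1b tv m1t rfl hlt P Q (rr P) (rr Q)).2 hWPlt hWQlt
      have hb : Q < P := (pl3b tv' m2t bv' m2b rfl hlt Q P (rr' Q) (rr' P)).2 hWQlt hWPlt
      exact absurd ha (lt_asymm hb)

end Master3
section Master4
variable {n : ℕ} {I : Finset (Fin n)} {j : Fin n} {R : Finset (GArrow n)}
  {P Q W : Fin n} {st sbt : ℤ}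

lemma fork_swap {pa pb qa qb wa wb : ℚ}
    (hsP : ∀ r ∈ R,
      (r.tailStr = P → (r.tailPos < pa ∧ r.tailPos < pb) ∨ (pa < r.tailPos ∧ pb < r.tailPos)) ∧
      (r.headStr = P → (r.headPos < pa ∧ r.headPos < pb) ∨ (pa < r.headPos ∧ pb < r.headPos)))
    (hsQ : ∀ r ∈ R,
      (r.tailStr = Q → (r.tailPos < qa ∧ r.tailPos < qb) ∨ (qa < r.tailPos ∧ qb < r.tailPos)) ∧
      (r.headStr = Q → (r.headPos < qa ∧ r.headPos < qb) ∨ (qa < r.headPos ∧ qb < r.headPos)))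
    (hsW : ∀ r ∈ R,
      (r.tailStr = W → (r.tailPos < wa ∧ r.tailPos < wb) ∨ (wa < r.tailPos ∧ wb < r.tailPos)) ∧
      (r.headStr = W → (r.headPos < wa ∧ r.headPos < wb) ∨ (wa < r.headPos ∧ wb < r.headPos)))
    (hw : wa ≠ wb)
    (hnE : ¬ (P < W ↔ Q < W))
    (h : IsPlanarTreeDiagram I j (Spair ⟨P,pa,W,wa,sbt⟩ ⟨Q,qa,W,wb,st⟩ R)) :
    IsPlanarTreeDiagram I j (Spair ⟨P,pb,W,wb,sbt⟩ ⟨Q,qb,W,wa,st⟩ R) := by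
  classical
  set bvA : GArrow n := ⟨P,pa,W,wa,sbt⟩ with hbvA
  set tvA : GArrow n := ⟨Q,qa,W,wb,st⟩ with htvA
  set bvB : GArrow n := ⟨P,pb,W,wb,sbt⟩ with hbvB
  set tvB : GArrow n := ⟨Q,qb,W,wa,st⟩ with htvB
  have hbm : bvA ∈ Spair bvA tvA R := mem_Spair.2 (Or.inl rfl)
  have htm : tvA ∈ Spair bvA tvA R := mem_Spair.2 (Or.inr (Or.inl rfl))
  have hPW : P ≠ W := h.1.1 bvA hbm
  have hQW : Q ≠ W := h.1.1 tvA htm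
  have hne : tvA ≠ bvA := by
    intro hh
    exact hw (congrArg GArrow.headPos hh).symm
  have hrbv : ∀ r ∈ R, r ≠ bvA := by
    intro r hr hh
    rcases (hsP r hr).1 (by rw [hh]) with ⟨h1, -⟩ | ⟨h1, -⟩ <;> rw [hh] at h1 <;>
      exact absurd h1 (lt_irrefl _)
  have hrtv : ∀ r ∈ R, r ≠ tvA := by
    intro r hr hh
    rcases (hsQ r hr).1 (by rw [hh]) with ⟨h1, -⟩ | ⟨h1, -⟩ <;> rw [hh] at h1 <;>
      exact absurd h1 (lt_irrefl _)
  set F : GArrow n → GArrow n := fun a => if a = bvA then bvB else if a = tvA then tvB else a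
    with hF
  have Fb : F bvA = bvB := by simp [hF]
  have Ft : F tvA = tvB := by simp [hF, hne]
  have Fr : ∀ r ∈ R, F r = r := by
    intro r hr
    simp [hF, hrbv r hr, hrtv r hr]
  have himg : Spair bvB tvB R = (Spair bvA tvA R).image F := by
    unfold Spair
    rw [Finset.image_insert, Finset.image_insert, Fb, Ft,
      Finset.image_congr (g := id) (fun x hx => Fr x hx), Finset.image_id]
  refine planar_transfer F himg ?_ ?_ ?_ ?_ h
  · intro x hx
    rcases mem_Spair.1 hx with rfl | rfl | hx'
    · rw [Fb]
    · rw [Ft]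
    · rw [Fr x hx']
  · intro x hx
    rcases mem_Spair.1 hx with rfl | rfl | hx'
    · rw [Fb]
    · rw [Ft]
    · rw [Fr x hx']
  · intro x hx y hy hxy
    rcases mem_Spair.1 hx with rfl | rfl | hx'
    · rcases mem_Spair.1 hy with rfl | rfl | hy'
      · exact absurd hxy.symm hPW
      · exact absurd hxy.symm hQW
      · rw [Fb, Fr y hy']
        rcases (hsW y hy').1 hxy.symm with ⟨h1, h2⟩ | ⟨h1, h2⟩
        · exact iff_of_false (lt_asymm h2) (lt_asymm h1)
        · exact iff_of_true h2 h1
    · rcases mem_Spair.1 hy with rfl | rfl | hy'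
      · exact absurd hxy.symm hPW
      · exact absurd hxy.symm hQW
      · rw [Ft, Fr y hy']
        rcases (hsW y hy').1 hxy.symm with ⟨h1, h2⟩ | ⟨h1, h2⟩
        · exact iff_of_false (lt_asymm h1) (lt_asymm h2)
        · exact iff_of_true h1 h2
    · rcases mem_Spair.1 hy with rfl | rfl | hy'
      · rw [Fr x hx', Fb]
        rcases (hsP x hx').2 hxy with ⟨h1, h2⟩ | ⟨h1, h2⟩
        · exact iff_of_true h2 h1
        · exact iff_of_false (lt_asymm h2) (lt_asymm h1)
      · rw [Fr x hx', Ft]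
        rcases (hsQ x hx').2 hxy with ⟨h1, h2⟩ | ⟨h1, h2⟩
        · exact iff_of_true h2 h1
        · exact iff_of_false (lt_asymm h2) (lt_asymm h1)
      · rw [Fr x hx', Fr y hy']
  · intro x hx y hy hxy hpoint
    rcases mem_Spair.1 hx with rfl | rfl | hx'
    · rcases mem_Spair.1 hy with rfl | rfl | hy'
      · rw [Fb]
        exact iff_of_false (lt_irrefl _) (lt_irrefl _)
      · exact absurd hpoint hnE
      · rw [Fb, Fr y hy']
        rcases (hsW y hy').2 hxy.symm with ⟨h1, h2⟩ | ⟨h1, h2⟩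
        · exact iff_of_false (lt_asymm h2) (lt_asymm h1)
        · exact iff_of_true h2 h1
    · rcases mem_Spair.1 hy with rfl | rfl | hy'
      · exact absurd hpoint.symm hnE
      · rw [Ft]
        exact iff_of_false (lt_irrefl _) (lt_irrefl _)
      · rw [Ft, Fr y hy']
        rcases (hsW y hy').2 hxy.symm with ⟨h1, h2⟩ | ⟨h1, h2⟩
        · exact iff_of_false (lt_asymm h1) (lt_asymm h2)
        · exact iff_of_true h1 h2
    · rcases mem_Spair.1 hy with rfl | rfl | hy'
      · rw [Fr x hx', Fb]
        rcases (hsW x hx').2 hxy with ⟨h1, h2⟩ | ⟨h1, h2⟩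
        · exact iff_of_true h2 h1
        · exact iff_of_false (lt_asymm h2) (lt_asymm h1)
      · rw [Fr x hx', Ft]
        rcases (hsW x hx').2 hxy with ⟨h1, h2⟩ | ⟨h1, h2⟩
        · exact iff_of_true h1 h2
        · exact iff_of_false (lt_asymm h1) (lt_asymm h2)
      · rw [Fr x hx', Fr y hy']

end Master4
section Core
variable {n : ℕ} {I : Finset (Fin n)} {j : Fin n} {R : Finset (GArrow n)}
  {P Q W : Fin n} {p1 p2 q1 q2 w1 w2 : ℚ} {sb st sbt : ℤ}

lemma epsv (A B : Fin n) (a b : ℚ) (s : ℤ) :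
    eps (⟨A,a,B,b,s⟩ : GArrow n) = if A < B then -1 else 1 := rfl

lemma core (hjI : j ∉ I)
    (hsP : ∀ r ∈ R,
      (r.tailStr = P → (r.tailPos < p1 ∧ r.tailPos < p2) ∨ (p1 < r.tailPos ∧ p2 < r.tailPos)) ∧
      (r.headStr = P → (r.headPos < p1 ∧ r.headPos < p2) ∨ (p1 < r.headPos ∧ p2 < r.headPos)))
    (hsQ : ∀ r ∈ R,
      (r.tailStr = Q → (r.tailPos < q1 ∧ r.tailPos < q2) ∨ (q1 < r.tailPos ∧ q2 < r.tailPos)) ∧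
      (r.headStr = Q → (r.headPos < q1 ∧ r.headPos < q2) ∨ (q1 < r.headPos ∧ q2 < r.headPos)))
    (hsW : ∀ r ∈ R,
      (r.tailStr = W → (r.tailPos < w1 ∧ r.tailPos < w2) ∨ (w1 < r.tailPos ∧ w2 < r.tailPos)) ∧
      (r.headStr = W → (r.headPos < w1 ∧ r.headPos < w2) ∨ (w1 < r.headPos ∧ w2 < r.headPos)))
    (hq12 : q1 < q2) (hw12 : w1 ≠ w2)
    (hsb : sb = 1 ∨ sb = -1)
    (hmix : sb * sbt = if w1 < w2 then -1 else 1) :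
    wt I j (Spair ⟨P,p1,Q,q1,sb⟩ ⟨Q,q2,W,w1,st⟩ R) +
      wt I j (Spair ⟨P,p2,W,w2,sbt⟩ ⟨Q,q2,W,w1,st⟩ R) =
    wt I j (Spair ⟨P,p2,Q,q2,sb⟩ ⟨Q,q1,W,w2,st⟩ R) +
      wt I j (Spair ⟨P,p1,W,w1,sbt⟩ ⟨Q,q1,W,w2,st⟩ R) := by
  classical
  by_cases hPQ : P = Q
  · rw [wt_eq_zero_of_self (x := ⟨P,p1,Q,q1,sb⟩) (mem_Spair.2 (Or.inl rfl)) hPQ,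
      wt_eq_zero_of_self (x := ⟨P,p2,Q,q2,sb⟩) (mem_Spair.2 (Or.inl rfl)) hPQ,
      wt_eq_zero_of_dup (x := ⟨P,p2,W,w2,sbt⟩) (y := ⟨Q,q2,W,w1,st⟩)
        (mem_Spair.2 (Or.inl rfl)) (mem_Spair.2 (Or.inr (Or.inl rfl)))
        (fun h => hw12 (congrArg GArrow.headPos h).symm) hPQ,
      wt_eq_zero_of_dup (x := ⟨P,p1,W,w1,sbt⟩) (y := ⟨Q,q1,W,w2,st⟩)
        (mem_Spair.2 (Or.inl rfl)) (mem_Spair.2 (Or.inr (Or.inl rfl)))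
        (fun h => hw12 (congrArg GArrow.headPos h)) hPQ]
  by_cases hQW : Q = W
  · rw [wt_eq_zero_of_self (x := ⟨Q,q2,W,w1,st⟩) (mem_Spair.2 (Or.inr (Or.inl rfl))) hQW,
      wt_eq_zero_of_self (x := ⟨Q,q2,W,w1,st⟩) (mem_Spair.2 (Or.inr (Or.inl rfl))) hQW,
      wt_eq_zero_of_self (x := ⟨Q,q1,W,w2,st⟩) (mem_Spair.2 (Or.inr (Or.inl rfl))) hQW,
      wt_eq_zero_of_self (x := ⟨Q,q1,W,w2,st⟩) (mem_Spair.2 (Or.inr (Or.inl rfl))) hQW]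
  by_cases hPW : P = W
  · have hcyc : ∀ (pa qa qb wa : ℚ),
        ¬ IsPlanarTreeDiagram I j (Spair ⟨P,pa,Q,qa,sb⟩ ⟨Q,qb,W,wa,st⟩ R) := by
      intro pa qa qb wa hpl
      have e1 : ParentRel (Spair ⟨P,pa,Q,qa,sb⟩ ⟨Q,qb,W,wa,st⟩ R) P Q :=
        ⟨⟨Q,qb,W,wa,st⟩, mem_Spair.2 (Or.inr (Or.inl rfl)), rfl, hPW.symm⟩
      have e2 : ParentRel (Spair ⟨P,pa,Q,qa,sb⟩ ⟨Q,qb,W,wa,st⟩ R) Q P :=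
        ⟨⟨P,pa,Q,qa,sb⟩, mem_Spair.2 (Or.inl rfl), rfl, rfl⟩
      exact no_cycle hpl hjI P (Relation.TransGen.tail' (Relation.ReflTransGen.single e1) e2)
    rw [wt_spair_zero (hcyc p1 q1 q2 w1), wt_spair_zero (hcyc p2 q2 q1 w2),
      wt_eq_zero_of_self (x := ⟨P,p2,W,w2,sbt⟩) (mem_Spair.2 (Or.inl rfl)) hPW,
      wt_eq_zero_of_self (x := ⟨P,p1,W,w1,sbt⟩) (mem_Spair.2 (Or.inl rfl)) hPW]
  -- non-degenerate case
  have hβR : (⟨P,p1,Q,q1,sb⟩ : GArrow n) ∉ R := by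
    intro hm
    rcases (hsP _ hm).1 rfl with ⟨h, -⟩ | ⟨h, -⟩ <;> exact absurd h (lt_irrefl _)
  have hβ'R : (⟨P,p2,Q,q2,sb⟩ : GArrow n) ∉ R := by
    intro hm
    rcases (hsP _ hm).1 rfl with ⟨-, h⟩ | ⟨-, h⟩ <;> exact absurd h (lt_irrefl _)
  have hbvR : (⟨P,p2,W,w2,sbt⟩ : GArrow n) ∉ R := by
    intro hm
    rcases (hsP _ hm).1 rfl with ⟨-, h⟩ | ⟨-, h⟩ <;> exact absurd h (lt_irrefl _)
  have hbv'R : (⟨P,p1,W,w1,sbt⟩ : GArrow n) ∉ R := by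
    intro hm
    rcases (hsP _ hm).1 rfl with ⟨h, -⟩ | ⟨h, -⟩ <;> exact absurd h (lt_irrefl _)
  have hτR : (⟨Q,q2,W,w1,st⟩ : GArrow n) ∉ R := by
    intro hm
    rcases (hsQ _ hm).1 rfl with ⟨-, h⟩ | ⟨-, h⟩ <;> exact absurd h (lt_irrefl _)
  have hτ'R : (⟨Q,q1,W,w2,st⟩ : GArrow n) ∉ R := by
    intro hm
    rcases (hsQ _ hm).1 rfl with ⟨h, -⟩ | ⟨h, -⟩ <;> exact absurd h (lt_irrefl _)
  have hβτ : (⟨P,p1,Q,q1,sb⟩ : GArrow n) ≠ ⟨Q,q2,W,w1,st⟩ :=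
    fun h => hPQ (congrArg GArrow.tailStr h)
  have hβ'τ' : (⟨P,p2,Q,q2,sb⟩ : GArrow n) ≠ ⟨Q,q1,W,w2,st⟩ :=
    fun h => hPQ (congrArg GArrow.tailStr h)
  have hbvτ : (⟨P,p2,W,w2,sbt⟩ : GArrow n) ≠ ⟨Q,q2,W,w1,st⟩ :=
    fun h => hPQ (congrArg GArrow.tailStr h)
  have hbv'τ' : (⟨P,p1,W,w1,sbt⟩ : GArrow n) ≠ ⟨Q,q1,W,w2,st⟩ :=
    fun h => hPQ (congrArg GArrow.tailStr h)
  have hnch' : ¬ IsPlanarTreeDiagram I j (Spair ⟨P,p2,Q,q2,sb⟩ ⟨Q,q1,W,w2,st⟩ R) :=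
    fun hf => absurd (chain_gate hf) (lt_asymm hq12)
  by_cases hch : IsPlanarTreeDiagram I j (Spair ⟨P,p1,Q,q1,sb⟩ ⟨Q,q2,W,w1,st⟩ R)
  · -- chain planar: E holds
    have hE : P < W ↔ Q < W := by
      have h := hch.2.2.1 ⟨Q,q2,W,w1,st⟩ (mem_Spair.2 (Or.inr (Or.inl rfl))) P
        (Relation.ReflTransGen.single ⟨⟨P,p1,Q,q1,sb⟩, mem_Spair.2 (Or.inl rfl), rfl, rfl⟩)
      exact h.symm
    rcases lt_or_gt_of_ne (fun h => hPW h : P ≠ W) with hPWlt | hWPlt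
    · have hQWlt : Q < W := hE.1 hPWlt
      rcases lt_or_gt_of_ne (fun h => hw12 h : w1 ≠ w2) with hω | hω
      · by_cases hπ : P < Q
        · -- LL, π, ω : cancel at G
          have hbt : sbt = -sb := by
            rw [if_pos hω] at hmix
            rcases hsb with rfl | rfl <;> linarith
          have hfk := chainToFork (sbt := sbt) hjI hPQ hQW hPW hsP hsQ hsW hch
            (Or.inr rfl) (Or.inr rfl) (Or.inl ⟨rfl, rfl⟩)
            (Or.inl ⟨hPWlt, hQWlt, iff_of_true hω hπ⟩)
          have hn2 : ¬ IsPlanarTreeDiagram I j (Spair ⟨P,p1,W,w1,sbt⟩ ⟨Q,q1,W,w2,st⟩ R) :=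
            fun hf => forks_contra hE hw12 hPW hQW hfk hf
          rw [wt_spair_eq hch hβτ hβR hτR, wt_spair_eq hfk hbvτ hbvR hτR,
            wt_spair_zero hnch', wt_spair_zero hn2, epsv, epsv, epsv, hbt,
            if_pos hπ, if_pos hQWlt, if_pos hPWlt]
          ring
        · -- LL, ¬π, ω : fork at G'
          have hπ' : Q < P := lt_of_le_of_ne (not_lt.1 hπ) (fun h => hPQ h.symm)
          have hbt : sbt = -sb := by
            rw [if_pos hω] at hmix
            rcases hsb with rfl | rfl <;> linarith
          have hfk := chainToFork (sbt := sbt) hjI hPQ hQW hPW hsP hsQ hsW hch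
            (Or.inl rfl) (Or.inl rfl) (Or.inr ⟨rfl, rfl⟩)
            (Or.inl ⟨hPWlt, hQWlt, iff_of_false (lt_asymm hω) hπ⟩)
          have hn2 : ¬ IsPlanarTreeDiagram I j (Spair ⟨P,p2,W,w2,sbt⟩ ⟨Q,q2,W,w1,st⟩ R) :=
            fun hf => forks_contra hE hw12 hPW hQW hf hfk
          rw [wt_spair_eq hch hβτ hβR hτR, wt_spair_eq hfk hbv'τ' hbv'R hτ'R,
            wt_spair_zero hnch', wt_spair_zero hn2, epsv, epsv, epsv, epsv, hbt,
            if_neg hπ, if_pos hQWlt, if_pos hPWlt]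
          ring
      · by_cases hπ : P < Q
        · -- LL, π, ¬ω : fork at G'
          have hbt : sbt = sb := by
            rw [if_neg (lt_asymm hω)] at hmix
            rcases hsb with rfl | rfl <;> linarith
          have hfk := chainToFork (sbt := sbt) hjI hPQ hQW hPW hsP hsQ hsW hch
            (Or.inl rfl) (Or.inl rfl) (Or.inr ⟨rfl, rfl⟩)
            (Or.inl ⟨hPWlt, hQWlt, iff_of_true hω hπ⟩)
          have hn2 : ¬ IsPlanarTreeDiagram I j (Spair ⟨P,p2,W,w2,sbt⟩ ⟨Q,q2,W,w1,st⟩ R) :=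
            fun hf => forks_contra hE hw12 hPW hQW hf hfk
          rw [wt_spair_eq hch hβτ hβR hτR, wt_spair_eq hfk hbv'τ' hbv'R hτ'R,
            wt_spair_zero hnch', wt_spair_zero hn2, epsv, epsv, epsv, epsv, hbt,
            if_pos hπ, if_pos hQWlt, if_pos hPWlt]
          ring
        · -- LL, ¬π, ¬ω : cancel at G
          have hπ' : Q < P := lt_of_le_of_ne (not_lt.1 hπ) (fun h => hPQ h.symm)
          have hbt : sbt = sb := by
            rw [if_neg (lt_asymm hω)] at hmix
            rcases hsb with rfl | rfl <;> linarith
          have hfk := chainToFork (sbt := sbt) hjI hPQ hQW hPW hsP hsQ hsW hch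
            (Or.inr rfl) (Or.inr rfl) (Or.inl ⟨rfl, rfl⟩)
            (Or.inl ⟨hPWlt, hQWlt, iff_of_false (lt_asymm hω) hπ⟩)
          have hn2 : ¬ IsPlanarTreeDiagram I j (Spair ⟨P,p1,W,w1,sbt⟩ ⟨Q,q1,W,w2,st⟩ R) :=
            fun hf => forks_contra hE hw12 hPW hQW hfk hf
          rw [wt_spair_eq hch hβτ hβR hτR, wt_spair_eq hfk hbvτ hbvR hτR,
            wt_spair_zero hnch', wt_spair_zero hn2, epsv, epsv, epsv, hbt,
            if_neg hπ, if_pos hQWlt, if_pos hPWlt]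
          ring
    · have hWQlt : W < Q := by
        rcases lt_trichotomy W Q with h | h | h
        · exact h
        · exact absurd h.symm hQW
        · exact absurd (hE.2 h) (lt_asymm hWPlt)
      rcases lt_or_gt_of_ne (fun h => hw12 h : w1 ≠ w2) with hω | hω
      · by_cases hπ : P < Q
        · -- RR, π, ω : fork at G'
          have hbt : sbt = -sb := by
            rw [if_pos hω] at hmix
            rcases hsb with rfl | rfl <;> linarith
          have hfk := chainToFork (sbt := sbt) hjI hPQ hQW hPW hsP hsQ hsW hch
            (Or.inl rfl) (Or.inl rfl) (Or.inr ⟨rfl, rfl⟩)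
            (Or.inr ⟨hWPlt, hWQlt, iff_of_true hω hπ⟩)
          have hn2 : ¬ IsPlanarTreeDiagram I j (Spair ⟨P,p2,W,w2,sbt⟩ ⟨Q,q2,W,w1,st⟩ R) :=
            fun hf => forks_contra hE hw12 hPW hQW hf hfk
          rw [wt_spair_eq hch hβτ hβR hτR, wt_spair_eq hfk hbv'τ' hbv'R hτ'R,
            wt_spair_zero hnch', wt_spair_zero hn2, epsv, epsv, epsv, epsv, hbt,
            if_pos hπ, if_neg (lt_asymm hWQlt), if_neg (lt_asymm hWPlt)]
          ring
        · -- RR, ¬π, ω : cancel at G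
          have hπ' : Q < P := lt_of_le_of_ne (not_lt.1 hπ) (fun h => hPQ h.symm)
          have hbt : sbt = -sb := by
            rw [if_pos hω] at hmix
            rcases hsb with rfl | rfl <;> linarith
          have hfk := chainToFork (sbt := sbt) hjI hPQ hQW hPW hsP hsQ hsW hch
            (Or.inr rfl) (Or.inr rfl) (Or.inl ⟨rfl, rfl⟩)
            (Or.inr ⟨hWPlt, hWQlt, iff_of_false (lt_asymm hω) hπ⟩)
          have hn2 : ¬ IsPlanarTreeDiagram I j (Spair ⟨P,p1,W,w1,sbt⟩ ⟨Q,q1,W,w2,st⟩ R) :=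
            fun hf => forks_contra hE hw12 hPW hQW hfk hf
          rw [wt_spair_eq hch hβτ hβR hτR, wt_spair_eq hfk hbvτ hbvR hτR,
            wt_spair_zero hnch', wt_spair_zero hn2, epsv, epsv, epsv, hbt,
            if_neg hπ, if_neg (lt_asymm hWQlt), if_neg (lt_asymm hWPlt)]
          ring
      · by_cases hπ : P < Q
        · -- RR, π, ¬ω : cancel at G
          have hbt : sbt = sb := by
            rw [if_neg (lt_asymm hω)] at hmix
            rcases hsb with rfl | rfl <;> linarith
          have hfk := chainToFork (sbt := sbt) hjI hPQ hQW hPW hsP hsQ hsW hch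
            (Or.inr rfl) (Or.inr rfl) (Or.inl ⟨rfl, rfl⟩)
            (Or.inr ⟨hWPlt, hWQlt, iff_of_true hω hπ⟩)
          have hn2 : ¬ IsPlanarTreeDiagram I j (Spair ⟨P,p1,W,w1,sbt⟩ ⟨Q,q1,W,w2,st⟩ R) :=
            fun hf => forks_contra hE hw12 hPW hQW hfk hf
          rw [wt_spair_eq hch hβτ hβR hτR, wt_spair_eq hfk hbvτ hbvR hτR,
            wt_spair_zero hnch', wt_spair_zero hn2, epsv, epsv, epsv, hbt,
            if_pos hπ, if_neg (lt_asymm hWQlt), if_neg (lt_asymm hWPlt)]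
          ring
        · -- RR, ¬π, ¬ω : fork at G'
          have hπ' : Q < P := lt_of_le_of_ne (not_lt.1 hπ) (fun h => hPQ h.symm)
          have hbt : sbt = sb := by
            rw [if_neg (lt_asymm hω)] at hmix
            rcases hsb with rfl | rfl <;> linarith
          have hfk := chainToFork (sbt := sbt) hjI hPQ hQW hPW hsP hsQ hsW hch
            (Or.inl rfl) (Or.inl rfl) (Or.inr ⟨rfl, rfl⟩)
            (Or.inr ⟨hWPlt, hWQlt, iff_of_false (lt_asymm hω) hπ⟩)
          have hn2 : ¬ IsPlanarTreeDiagram I j (Spair ⟨P,p2,W,w2,sbt⟩ ⟨Q,q2,W,w1,st⟩ R) :=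
            fun hf => forks_contra hE hw12 hPW hQW hf hfk
          rw [wt_spair_eq hch hβτ hβR hτR, wt_spair_eq hfk hbv'τ' hbv'R hτ'R,
            wt_spair_zero hnch', wt_spair_zero hn2, epsv, epsv, epsv, epsv, hbt,
            if_neg hπ, if_neg (lt_asymm hWQlt), if_neg (lt_asymm hWPlt)]
          ring
  · -- chain not planar
    by_cases hfkG : IsPlanarTreeDiagram I j (Spair ⟨P,p2,W,w2,sbt⟩ ⟨Q,q2,W,w1,st⟩ R)
    · have hnE : ¬ (P < W ↔ Q < W) := fun hE =>
        hch (forkToChain hjI hsP hsQ hsW hq12 hw12 (Or.inr rfl) (Or.inr rfl)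
          (Or.inl ⟨rfl, rfl⟩) hE hfkG)
      have hfkG' : IsPlanarTreeDiagram I j (Spair ⟨P,p1,W,w1,sbt⟩ ⟨Q,q1,W,w2,st⟩ R) := by
        refine fork_swap ?_ ?_ ?_ (fun h => hw12 h.symm) hnE hfkG
        · exact fun r hr => ⟨fun h => ((hsP r hr).1 h).imp And.symm And.symm,
            fun h => ((hsP r hr).2 h).imp And.symm And.symm⟩
        · exact fun r hr => ⟨fun h => ((hsQ r hr).1 h).imp And.symm And.symm,
            fun h => ((hsQ r hr).2 h).imp And.symm And.symm⟩
        · exact fun r hr => ⟨fun h => ((hsW r hr).1 h).imp And.symm And.symm,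
            fun h => ((hsW r hr).2 h).imp And.symm And.symm⟩
      rw [wt_spair_zero hch, wt_spair_zero hnch',
        wt_spair_eq hfkG hbvτ hbvR hτR, wt_spair_eq hfkG' hbv'τ' hbv'R hτ'R,
        epsv, epsv, epsv, epsv]
    · by_cases hfkG' : IsPlanarTreeDiagram I j (Spair ⟨P,p1,W,w1,sbt⟩ ⟨Q,q1,W,w2,st⟩ R)
      · have hnE : ¬ (P < W ↔ Q < W) := fun hE =>
          hch (forkToChain hjI hsP hsQ hsW hq12 hw12 (Or.inl rfl) (Or.inl rfl)
            (Or.inr ⟨rfl, rfl⟩) hE hfkG')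
        exact absurd (fork_swap hsP hsQ hsW hw12 hnE hfkG') hfkG
      · rw [wt_spair_zero hch, wt_spair_zero hnch', wt_spair_zero hfkG,
          wt_spair_zero hfkG']

end Core
section MasterFinal
variable {n : ℕ} {I : Finset (Fin n)} {j : Fin n} {R : Finset (GArrow n)}
  {P Q W : Fin n} {p1 p2 q1 q2 w1 w2 : ℚ} {sb st sbt : ℤ}

lemma master (hjI : j ∉ I)
    (hsP : ∀ r ∈ R,
      (r.tailStr = P → (r.tailPos < p1 ∧ r.tailPos < p2) ∨ (p1 < r.tailPos ∧ p2 < r.tailPos)) ∧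
      (r.headStr = P → (r.headPos < p1 ∧ r.headPos < p2) ∨ (p1 < r.headPos ∧ p2 < r.headPos)))
    (hsQ : ∀ r ∈ R,
      (r.tailStr = Q → (r.tailPos < q1 ∧ r.tailPos < q2) ∨ (q1 < r.tailPos ∧ q2 < r.tailPos)) ∧
      (r.headStr = Q → (r.headPos < q1 ∧ r.headPos < q2) ∨ (q1 < r.headPos ∧ q2 < r.headPos)))
    (hsW : ∀ r ∈ R,
      (r.tailStr = W → (r.tailPos < w1 ∧ r.tailPos < w2) ∨ (w1 < r.tailPos ∧ w2 < r.tailPos)) ∧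
      (r.headStr = W → (r.headPos < w1 ∧ r.headPos < w2) ∨ (w1 < r.headPos ∧ w2 < r.headPos)))
    (hq12 : q1 ≠ q2) (hw12 : w1 ≠ w2)
    (hsb : sb = 1 ∨ sb = -1)
    (hmix : sb * sbt = if q1 < q2 then (if w1 < w2 then -1 else 1)
      else (if w1 < w2 then 1 else -1)) :
    wt I j (Spair ⟨P,p1,Q,q1,sb⟩ ⟨Q,q2,W,w1,st⟩ R) +
      wt I j (Spair ⟨P,p2,W,w2,sbt⟩ ⟨Q,q2,W,w1,st⟩ R) =
    wt I j (Spair ⟨P,p2,Q,q2,sb⟩ ⟨Q,q1,W,w2,st⟩ R) +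
      wt I j (Spair ⟨P,p1,W,w1,sbt⟩ ⟨Q,q1,W,w2,st⟩ R) := by
  have swp : ∀ (a b : ℚ) (f : ∀ r ∈ R,
      (r.tailStr = P → (r.tailPos < a ∧ r.tailPos < b) ∨ (a < r.tailPos ∧ b < r.tailPos)) ∧
      (r.headStr = P → (r.headPos < a ∧ r.headPos < b) ∨ (a < r.headPos ∧ b < r.headPos))),
      True := fun _ _ _ => trivial
  rcases lt_or_gt_of_ne hq12 with h | h
  · rw [if_pos h] at hmix
    exact core hjI hsP hsQ hsW h hw12 hsb hmix
  · rw [if_neg (lt_asymm h)] at hmix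
    have hmix' : sb * sbt = if w2 < w1 then -1 else 1 := by
      rcases lt_or_gt_of_ne hw12 with hw | hw
      · rw [if_pos hw] at hmix
        rw [if_neg (lt_asymm hw)]
        exact hmix
      · rw [if_neg (lt_asymm hw)] at hmix
        rw [if_pos hw]
        exact hmix
    have key := core (P := P) (Q := Q) (W := W) (p1 := p2) (p2 := p1) (q1 := q2) (q2 := q1)
      (w1 := w2) (w2 := w1) (sb := sb) (st := st) (sbt := sbt) hjI
      (fun r hr => ⟨fun hh => ((hsP r hr).1 hh).imp And.symm And.symm,
        fun hh => ((hsP r hr).2 hh).imp And.symm And.symm⟩)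
      (fun r hr => ⟨fun hh => ((hsQ r hr).1 hh).imp And.symm And.symm,
        fun hh => ((hsQ r hr).2 hh).imp And.symm And.symm⟩)
      (fun r hr => ⟨fun hh => ((hsW r hr).1 hh).imp And.symm And.symm,
        fun hh => ((hsW r hr).2 hh).imp And.symm And.symm⟩)
      h hw12.symm hsb hmix'
    linarith [key]

lemma single_swap {δ δ' : GArrow n}
    (hts : δ'.tailStr = δ.tailStr) (hhs : δ'.headStr = δ.headStr) (hsg : δ'.sign = δ.sign)
    (hc5a : ∀ r ∈ R, δ.headStr = r.tailStr → (δ'.headPos < r.tailPos ↔ δ.headPos < r.tailPos))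
    (hc5b : ∀ r ∈ R, r.headStr = δ.tailStr → (r.headPos < δ'.tailPos ↔ r.headPos < δ.tailPos))
    (hc5s : δ.headStr = δ.tailStr → (δ'.headPos < δ'.tailPos ↔ δ.headPos < δ.tailPos))
    (hc4a : ∀ r ∈ R, δ.headStr = r.headStr →
      (δ'.headPos < r.headPos ↔ δ.headPos < r.headPos) ∧
      (r.headPos < δ'.headPos ↔ r.headPos < δ.headPos))
    (hδR : δ ∉ R) (hδ'R : δ' ∉ R) :
    wt I j (insert δ R) = wt I j (insert δ' R) := by
  classical
  have hmem : ∀ a, a ∈ insert δ R ↔ a = δ ∨ a ∈ R := by simp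
  have hmem' : ∀ a, a ∈ insert δ' R ↔ a = δ' ∨ a ∈ R := by simp
  set F : GArrow n → GArrow n := fun a => if a = δ then δ' else a with hF
  set G : GArrow n → GArrow n := fun a => if a = δ' then δ else a with hG
  have Fd : F δ = δ' := by simp [hF]
  have Gd : G δ' = δ := by simp [hG]
  have Fr : ∀ r ∈ R, F r = r := by
    intro r hr
    have hne : r ≠ δ := fun h => hδR (h ▸ hr)
    simp [hF, hne]
  have Gr : ∀ r ∈ R, G r = r := by
    intro r hr
    have hne : r ≠ δ' := fun h => hδ'R (h ▸ hr)
    simp [hG, hne]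
  have himg : insert δ' R = (insert δ R).image F := by
    rw [Finset.image_insert, Fd, Finset.image_congr (g := id) (fun x hx => Fr x hx),
      Finset.image_id]
  have himg' : insert δ R = (insert δ' R).image G := by
    rw [Finset.image_insert, Gd, Finset.image_congr (g := id) (fun x hx => Gr x hx),
      Finset.image_id]
  have hiff : IsPlanarTreeDiagram I j (insert δ R) ↔ IsPlanarTreeDiagram I j (insert δ' R) := by
    constructor
    · intro h
      refine planar_transfer F himg ?_ ?_ ?_ ?_ h
      · intro x hx
        rcases (hmem x).1 hx with rfl | hx'
        · rw [Fd, hts]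
        · rw [Fr x hx']
      · intro x hx
        rcases (hmem x).1 hx with rfl | hx'
        · rw [Fd, hhs]
        · rw [Fr x hx']
      · intro x hx y hy hxy
        rcases (hmem x).1 hx with rfl | hx'
        · rcases (hmem y).1 hy with rfl | hy'
          · rw [Fd]
            exact hc5s hxy
          · rw [Fd, Fr y hy']
            exact hc5a y hy' hxy
        · rcases (hmem y).1 hy with rfl | hy'
          · rw [Fd, Fr x hx']
            exact hc5b x hx' hxy
          · rw [Fr x hx', Fr y hy']
      · intro x hx y hy hxy hpt
        rcases (hmem x).1 hx with rfl | hx'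
        · rcases (hmem y).1 hy with rfl | hy'
          · rw [Fd]
            exact iff_of_false (lt_irrefl _) (lt_irrefl _)
          · rw [Fd, Fr y hy']
            exact (hc4a y hy' hxy).1
        · rcases (hmem y).1 hy with rfl | hy'
          · rw [Fd, Fr x hx']
            exact (hc4a x hx' hxy.symm).2
          · rw [Fr x hx', Fr y hy']
    · intro h
      refine planar_transfer G himg' ?_ ?_ ?_ ?_ h
      · intro x hx
        rcases (hmem' x).1 hx with rfl | hx'
        · rw [Gd, hts]
        · rw [Gr x hx']
      · intro x hx
        rcases (hmem' x).1 hx with rfl | hx'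
        · rw [Gd, hhs]
        · rw [Gr x hx']
      · intro x hx y hy hxy
        rcases (hmem' x).1 hx with rfl | hx'
        · rcases (hmem' y).1 hy with rfl | hy'
          · rw [Gd]
            exact (hc5s (by rw [hhs, hts] at hxy; exact hxy)).symm
          · rw [Gd, Gr y hy']
            exact (hc5a y hy' (by rw [hhs] at hxy; exact hxy)).symm
        · rcases (hmem' y).1 hy with rfl | hy'
          · rw [Gd, Gr x hx']
            exact (hc5b x hx' (by rw [hts] at hxy; exact hxy)).symm
          · rw [Gr x hx', Gr y hy']
      · intro x hx y hy hxy hpt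
        rcases (hmem' x).1 hx with rfl | hx'
        · rcases (hmem' y).1 hy with rfl | hy'
          · rw [Gd]
            exact iff_of_false (lt_irrefl _) (lt_irrefl _)
          · rw [Gd, Gr y hy']
            exact ((hc4a y hy' (by rw [hhs] at hxy; exact hxy)).1).symm
        · rcases (hmem' y).1 hy with rfl | hy'
          · rw [Gd, Gr x hx']
            exact ((hc4a x hx' (by rw [hhs] at hxy; exact (hxy.symm))).2).symm
          · rw [Gr x hx', Gr y hy']
  by_cases h : IsPlanarTreeDiagram I j (insert δ R)
  · rw [wt, wt, if_pos h, if_pos (hiff.1 h), treeSign_insert hδR, treeSign_insert hδ'R,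
      Finset.prod_insert hδR, Finset.prod_insert hδ'R, hsg]
    have : eps δ' = eps δ := by
      unfold eps
      rw [hts, hhs]
    rw [this]
  · rw [wt, wt, if_neg h, if_neg (fun hh => h (hiff.2 hh))]

end MasterFinal
section Assembly
variable {n : ℕ}

lemma sep_of {a b x : ℚ} (h : ¬(min a b < x ∧ x < max a b)) (h1 : x ≠ a) (h2 : x ≠ b) :
    (x < a ∧ x < b) ∨ (a < x ∧ b < x) := by
  rcases lt_trichotomy x a with ha | ha | ha
  · left
    refine ⟨ha, ?_⟩
    rcases lt_trichotomy x b with hb | hb | hb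
    · exact hb
    · exact absurd hb h2
    · exact absurd ⟨lt_of_le_of_lt (min_le_right a b) hb,
        lt_of_lt_of_le ha (le_max_left a b)⟩ h
  · exact absurd ha h1
  · right
    refine ⟨ha, ?_⟩
    rcases lt_trichotomy x b with hb | hb | hb
    · exact absurd ⟨lt_of_le_of_lt (min_le_left a b) ha,
        lt_of_lt_of_le hb (le_max_right a b)⟩ h
    · exact absurd hb h2
    · exact hb

lemma cross_iff {x1 x2 y1 y2 : ℚ}
    (h1 : (x1 < y1 ∧ x1 < y2) ∨ (y1 < x1 ∧ y2 < x1))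
    (h2 : (x2 < y1 ∧ x2 < y2) ∨ (y1 < x2 ∧ y2 < x2))
    (h3 : (y1 < x1 ∧ y1 < x2) ∨ (x1 < y1 ∧ x2 < y1)) :
    (x1 < y1 ↔ x2 < y2) := by
  rcases h1 with ⟨ha, hb⟩ | ⟨ha, hb⟩
  · rcases h2 with ⟨hc, hd⟩ | ⟨hc, hd⟩
    · exact iff_of_true ha hd
    · rcases h3 with ⟨he, hf⟩ | ⟨he, hf⟩
      · exact absurd ha (lt_asymm he)
      · exact absurd hc (lt_asymm hf)
  · rcases h2 with ⟨hc, hd⟩ | ⟨hc, hd⟩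
    · rcases h3 with ⟨he, hf⟩ | ⟨he, hf⟩
      · exact absurd hc (lt_asymm hf)
      · exact absurd he (lt_asymm ha)
    · exact iff_of_false (lt_asymm ha) (lt_asymm hd)

set_option maxHeartbeats 2000000 in
lemma omega3_abstract (G G' : GaussDiagram n) (P Q W : Fin n)
    (p1 p2 q1 q2 w1 w2 : ℚ) (sb st sbt : ℤ)
    (haG : (⟨P,p1,Q,q1,sb⟩ : GArrow n) ∈ G.arrows)
    (hbG : (⟨P,p2,W,w2,sbt⟩ : GArrow n) ∈ G.arrows)
    (hcG : (⟨Q,q2,W,w1,st⟩ : GArrow n) ∈ G.arrows)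
    (adjP : IsAdjacentPair G P p1 p2) (adjQ : IsAdjacentPair G Q q1 q2)
    (adjW : IsAdjacentPair G W w1 w2)
    (hmix : sb * sbt = if q1 < q2 then (if w1 < w2 then -1 else 1)
      else (if w1 < w2 then 1 else -1))
    (hG' : G'.arrows =
      (((G.arrows.erase ⟨P,p1,Q,q1,sb⟩).erase ⟨P,p2,W,w2,sbt⟩).erase ⟨Q,q2,W,w1,st⟩) ∪
        {⟨P,p2,Q,q2,sb⟩, ⟨P,p1,W,w1,sbt⟩, ⟨Q,q1,W,w2,st⟩}) :
    ∀ (I : Finset (Fin n)) (j : Fin n), j ∉ I → Z I j G = Z I j G' := by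
  classical
  intro I j hjI
  set a : GArrow n := ⟨P,p1,Q,q1,sb⟩ with ha_def
  set b : GArrow n := ⟨P,p2,W,w2,sbt⟩ with hb_def
  set c : GArrow n := ⟨Q,q2,W,w1,st⟩ with hc_def
  set a' : GArrow n := ⟨P,p2,Q,q2,sb⟩ with ha'_def
  set b' : GArrow n := ⟨P,p1,W,w1,sbt⟩ with hb'_def
  set c' : GArrow n := ⟨Q,q1,W,w2,st⟩ with hc'_def
  have ha'G' : a' ∈ G'.arrows := by rw [hG']; exact Finset.mem_union_right _ (by simp)
  have hb'G' : b' ∈ G'.arrows := by rw [hG']; exact Finset.mem_union_right _ (by simp)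
  have hc'G' : c' ∈ G'.arrows := by rw [hG']; exact Finset.mem_union_right _ (by simp)
  -- distinctness of the six arrows
  have D2 : a ≠ b := fun h => adjP.1 (congrArg GArrow.tailPos h)
  have D3 : b ≠ c := fun h => adjW.1 (congrArg GArrow.headPos h).symm
  have D1 : a ≠ c := by
    intro h
    have h3 : Q = W := congrArg GArrow.headStr h
    have h4 : q1 = w1 := congrArg GArrow.headPos h
    have hep : GArrow.ep c' false = GArrow.ep b' true := by
      show (Q, q1) = (W, w1)
      rw [h3, h4]
    simpa using (G'.endpoints_distinct c' hc'G' b' hb'G' false true hep).2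
  have D4 : a' ≠ b' := fun h => adjP.1 (congrArg GArrow.tailPos h).symm
  have D6 : b' ≠ c' := fun h => adjW.1 (congrArg GArrow.headPos h)
  have D5 : a' ≠ c' := by
    intro h
    have h3 : Q = W := congrArg GArrow.headStr h
    have h4 : q2 = w2 := congrArg GArrow.headPos h
    have hep : GArrow.ep c false = GArrow.ep b true := by
      show (Q, q2) = (W, w2)
      rw [h3, h4]
    simpa using (G.endpoints_distinct c hcG b hbG false true hep).2
  have D7 : a' ∉ G.arrows := by
    intro hm
    have hep : GArrow.ep a' true = GArrow.ep c false := rfl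
    simpa using (G.endpoints_distinct a' hm c hcG true false hep).2
  have D9 : c' ∉ G.arrows := by
    intro hm
    have hep : GArrow.ep c' false = GArrow.ep a true := rfl
    simpa using (G.endpoints_distinct c' hm a haG false true hep).2
  have D8 : b' ∉ G.arrows := by
    intro hm
    have hep : GArrow.ep b' true = GArrow.ep c true := rfl
    have h1 : b' = c := (G.endpoints_distinct b' hm c hcG true true hep).1
    have h2 : P = Q := congrArg GArrow.tailStr h1
    have h3 : p1 = q2 := congrArg GArrow.tailPos h1
    have hep2 : GArrow.ep a false = GArrow.ep c false := by
      show (P, p1) = (Q, q2)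
      rw [h2, h3]
    exact D1 (G.endpoints_distinct a haG c hcG false false hep2).1
  set common : Finset (GArrow n) := ((G.arrows.erase a).erase b).erase c with hcom_def
  have hsub : ∀ r ∈ common, r ∈ G.arrows := by
    intro r hr
    exact Finset.mem_of_mem_erase (Finset.mem_of_mem_erase (Finset.mem_of_mem_erase hr))
  have hmemc : ∀ r ∈ common, r ≠ a ∧ r ≠ b ∧ r ≠ c := by
    intro r hr
    have h1 := Finset.mem_erase.1 hr
    have h2 := Finset.mem_erase.1 h1.2
    have h3 := Finset.mem_erase.1 h2.2
    exact ⟨h3.1, h2.1, h1.1⟩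
  have hacom : a ∉ common := fun hm => (hmemc a hm).1 rfl
  have hbcom : b ∉ common := fun hm => (hmemc b hm).2.1 rfl
  have hccom : c ∉ common := fun hm => (hmemc c hm).2.2 rfl
  have ha'com : a' ∉ common := fun hm => D7 (hsub _ hm)
  have hb'com : b' ∉ common := fun hm => D8 (hsub _ hm)
  have hc'com : c' ∉ common := fun hm => D9 (hsub _ hm)
  -- separation facts for arrows in common
  have hepP : ∀ r ∈ common, ∀ s : Bool, (GArrow.ep r s).1 = P →
      ((GArrow.ep r s).2 < p1 ∧ (GArrow.ep r s).2 < p2) ∨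
      (p1 < (GArrow.ep r s).2 ∧ p2 < (GArrow.ep r s).2) := by
    intro r hr s hs
    refine sep_of (adjP.2 r (hsub r hr) s hs) ?_ ?_
    · intro h
      have hep : GArrow.ep r s = GArrow.ep a false := by
        show _ = (P, p1)
        rw [← hs, ← h]
      exact (hmemc r hr).1 (G.endpoints_distinct r (hsub r hr) a haG s false hep).1
    · intro h
      have hep : GArrow.ep r s = GArrow.ep b false := by
        show _ = (P, p2)
        rw [← hs, ← h]
      exact (hmemc r hr).2.1 (G.endpoints_distinct r (hsub r hr) b hbG s false hep).1
  have hepQ : ∀ r ∈ common, ∀ s : Bool, (GArrow.ep r s).1 = Q →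
      ((GArrow.ep r s).2 < q1 ∧ (GArrow.ep r s).2 < q2) ∨
      (q1 < (GArrow.ep r s).2 ∧ q2 < (GArrow.ep r s).2) := by
    intro r hr s hs
    refine sep_of (adjQ.2 r (hsub r hr) s hs) ?_ ?_
    · intro h
      have hep : GArrow.ep r s = GArrow.ep a true := by
        show _ = (Q, q1)
        rw [← hs, ← h]
      exact (hmemc r hr).1 (G.endpoints_distinct r (hsub r hr) a haG s true hep).1
    · intro h
      have hep : GArrow.ep r s = GArrow.ep c false := by
        show _ = (Q, q2)
        rw [← hs, ← h]
      exact (hmemc r hr).2.2 (G.endpoints_distinct r (hsub r hr) c hcG s false hep).1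
  have hepW : ∀ r ∈ common, ∀ s : Bool, (GArrow.ep r s).1 = W →
      ((GArrow.ep r s).2 < w1 ∧ (GArrow.ep r s).2 < w2) ∨
      (w1 < (GArrow.ep r s).2 ∧ w2 < (GArrow.ep r s).2) := by
    intro r hr s hs
    refine sep_of (adjW.2 r (hsub r hr) s hs) ?_ ?_
    · intro h
      have hep : GArrow.ep r s = GArrow.ep c true := by
        show _ = (W, w1)
        rw [← hs, ← h]
      exact (hmemc r hr).2.2 (G.endpoints_distinct r (hsub r hr) c hcG s true hep).1
    · intro h
      have hep : GArrow.ep r s = GArrow.ep b true := by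
        show _ = (W, w2)
        rw [← hs, ← h]
      exact (hmemc r hr).2.1 (G.endpoints_distinct r (hsub r hr) b hbG s true hep).1
  have hsepP : ∀ r ∈ common,
      (r.tailStr = P → (r.tailPos < p1 ∧ r.tailPos < p2) ∨ (p1 < r.tailPos ∧ p2 < r.tailPos)) ∧
      (r.headStr = P → (r.headPos < p1 ∧ r.headPos < p2) ∨ (p1 < r.headPos ∧ p2 < r.headPos)) :=
    fun r hr => ⟨hepP r hr false, hepP r hr true⟩
  have hsepQ : ∀ r ∈ common,
      (r.tailStr = Q → (r.tailPos < q1 ∧ r.tailPos < q2) ∨ (q1 < r.tailPos ∧ q2 < r.tailPos)) ∧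
      (r.headStr = Q → (r.headPos < q1 ∧ r.headPos < q2) ∨ (q1 < r.headPos ∧ q2 < r.headPos)) :=
    fun r hr => ⟨hepQ r hr false, hepQ r hr true⟩
  have hsepW : ∀ r ∈ common,
      (r.tailStr = W → (r.tailPos < w1 ∧ r.tailPos < w2) ∨ (w1 < r.tailPos ∧ w2 < r.tailPos)) ∧
      (r.headStr = W → (r.headPos < w1 ∧ r.headPos < w2) ∨ (w1 < r.headPos ∧ w2 < r.headPos)) :=
    fun r hr => ⟨hepW r hr false, hepW r hr true⟩
  have hsb : sb = 1 ∨ sb = -1 := G.sign_pm a haG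
  -- the three single-arrow transfers
  have S1 : ∀ R ∈ common.powerset, wt I j (insert a R) = wt I j (insert a' R) := by
    intro R hRp
    have hR := Finset.mem_powerset.1 hRp
    refine single_swap rfl rfl rfl ?_ ?_ ?_ ?_ (fun hm => hacom (hR hm))
      (fun hm => ha'com (hR hm))
    · intro r hr hQr
      rcases (hsepQ r (hR hr)).1 hQr.symm with ⟨h1, h2⟩ | ⟨h1, h2⟩
      · exact iff_of_false (lt_asymm h2) (lt_asymm h1)
      · exact iff_of_true h2 h1
    · intro r hr hrP
      rcases (hsepP r (hR hr)).2 hrP with ⟨h1, h2⟩ | ⟨h1, h2⟩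
      · exact iff_of_true h2 h1
      · exact iff_of_false (lt_asymm h2) (lt_asymm h1)
    · intro hQP0
      have hQP : Q = P := hQP0
      have sq2P : (q2 < p1 ∧ q2 < p2) ∨ (p1 < q2 ∧ p2 < q2) := by
        refine sep_of (adjP.2 c hcG false hQP) ?_ ?_
        · intro h
          have hep : GArrow.ep c false = GArrow.ep a false := by
            show (Q, q2) = (P, p1); rw [hQP, h]
          exact D1 (G.endpoints_distinct c hcG a haG false false hep).1.symm
        · intro h
          have hep : GArrow.ep c false = GArrow.ep b false := by
            show (Q, q2) = (P, p2); rw [hQP, h]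
          exact D3 (G.endpoints_distinct c hcG b hbG false false hep).1.symm
      have sq1P : (q1 < p1 ∧ q1 < p2) ∨ (p1 < q1 ∧ p2 < q1) := by
        refine sep_of (adjP.2 a haG true hQP) ?_ ?_
        · intro h
          have hep : GArrow.ep a true = GArrow.ep a false := by
            show (Q, q1) = (P, p1); rw [hQP, h]
          simpa using (G.endpoints_distinct a haG a haG true false hep).2
        · intro h
          have hep : GArrow.ep a true = GArrow.ep b false := by
            show (Q, q1) = (P, p2); rw [hQP, h]
          simpa using (G.endpoints_distinct a haG b hbG true false hep).2
      have sp2Q : (p2 < q1 ∧ p2 < q2) ∨ (q1 < p2 ∧ q2 < p2) := by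
        refine sep_of (adjQ.2 b hbG false hQP.symm) ?_ ?_
        · intro h
          have hep : GArrow.ep b false = GArrow.ep a true := by
            show (P, p2) = (Q, q1); rw [hQP, h]
          simpa using (G.endpoints_distinct b hbG a haG false true hep).2
        · intro h
          have hep : GArrow.ep b false = GArrow.ep c false := by
            show (P, p2) = (Q, q2); rw [hQP, h]
          exact D3 (G.endpoints_distinct b hbG c hcG false false hep).1
      exact cross_iff (sq2P.imp And.symm And.symm) (sq1P.imp And.symm And.symm)
        (sp2Q.imp And.symm And.symm)
    · intro r hr hQr
      rcases (hsepQ r (hR hr)).2 hQr.symm with ⟨h1, h2⟩ | ⟨h1, h2⟩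
      · exact ⟨iff_of_false (lt_asymm h2) (lt_asymm h1), iff_of_true h2 h1⟩
      · exact ⟨iff_of_true h2 h1, iff_of_false (lt_asymm h2) (lt_asymm h1)⟩
  have S2 : ∀ R ∈ common.powerset, wt I j (insert b R) = wt I j (insert b' R) := by
    intro R hRp
    have hR := Finset.mem_powerset.1 hRp
    refine single_swap rfl rfl rfl ?_ ?_ ?_ ?_ (fun hm => hbcom (hR hm))
      (fun hm => hb'com (hR hm))
    · intro r hr hWr
      rcases (hsepW r (hR hr)).1 hWr.symm with ⟨h1, h2⟩ | ⟨h1, h2⟩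
      · exact iff_of_false (lt_asymm h1) (lt_asymm h2)
      · exact iff_of_true h1 h2
    · intro r hr hrP
      rcases (hsepP r (hR hr)).2 hrP with ⟨h1, h2⟩ | ⟨h1, h2⟩
      · exact iff_of_true h1 h2
      · exact iff_of_false (lt_asymm h1) (lt_asymm h2)
    · intro hWP0
      have hWP : W = P := hWP0
      have s1' : (w1 < p1 ∧ w1 < p2) ∨ (p1 < w1 ∧ p2 < w1) := by
        refine sep_of (adjP.2 c hcG true hWP) ?_ ?_
        · intro h
          have hep : GArrow.ep c true = GArrow.ep a false := by
            show (W, w1) = (P, p1); rw [hWP, h]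
          simpa using (G.endpoints_distinct c hcG a haG true false hep).2
        · intro h
          have hep : GArrow.ep c true = GArrow.ep b false := by
            show (W, w1) = (P, p2); rw [hWP, h]
          simpa using (G.endpoints_distinct c hcG b hbG true false hep).2
      have s2' : (w2 < p1 ∧ w2 < p2) ∨ (p1 < w2 ∧ p2 < w2) := by
        refine sep_of (adjP.2 b hbG true hWP) ?_ ?_
        · intro h
          have hep : GArrow.ep b true = GArrow.ep a false := by
            show (W, w2) = (P, p1); rw [hWP, h]
          simpa using (G.endpoints_distinct b hbG a haG true false hep).2
        · intro h
          have hep : GArrow.ep b true = GArrow.ep b false := by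
            show (W, w2) = (P, p2); rw [hWP, h]
          simpa using (G.endpoints_distinct b hbG b hbG true false hep).2
      have s3' : (p1 < w1 ∧ p1 < w2) ∨ (w1 < p1 ∧ w2 < p1) := by
        refine sep_of (adjW.2 a haG false hWP.symm) ?_ ?_
        · intro h
          have hep : GArrow.ep a false = GArrow.ep c true := by
            show (P, p1) = (W, w1); rw [hWP, h]
          simpa using (G.endpoints_distinct a haG c hcG false true hep).2
        · intro h
          have hep : GArrow.ep a false = GArrow.ep b true := by
            show (P, p1) = (W, w2); rw [hWP, h]
          simpa using (G.endpoints_distinct a haG b hbG false true hep).2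
      exact cross_iff s1' s2' s3'
    · intro r hr hWr
      rcases (hsepW r (hR hr)).2 hWr.symm with ⟨h1, h2⟩ | ⟨h1, h2⟩
      · exact ⟨iff_of_false (lt_asymm h1) (lt_asymm h2), iff_of_true h1 h2⟩
      · exact ⟨iff_of_true h1 h2, iff_of_false (lt_asymm h1) (lt_asymm h2)⟩
  have S3 : ∀ R ∈ common.powerset, wt I j (insert c R) = wt I j (insert c' R) := by
    intro R hRp
    have hR := Finset.mem_powerset.1 hRp
    refine single_swap rfl rfl rfl ?_ ?_ ?_ ?_ (fun hm => hccom (hR hm))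
      (fun hm => hc'com (hR hm))
    · intro r hr hWr
      rcases (hsepW r (hR hr)).1 hWr.symm with ⟨h1, h2⟩ | ⟨h1, h2⟩
      · exact iff_of_false (lt_asymm h2) (lt_asymm h1)
      · exact iff_of_true h2 h1
    · intro r hr hrQ
      rcases (hsepQ r (hR hr)).2 hrQ with ⟨h1, h2⟩ | ⟨h1, h2⟩
      · exact iff_of_true h1 h2
      · exact iff_of_false (lt_asymm h1) (lt_asymm h2)
    · intro hWQ0
      have hWQ : W = Q := hWQ0
      have s1' : (w2 < q1 ∧ w2 < q2) ∨ (q1 < w2 ∧ q2 < w2) := by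
        refine sep_of (adjQ.2 b hbG true hWQ) ?_ ?_
        · intro h
          have hep : GArrow.ep b true = GArrow.ep a true := by
            show (W, w2) = (Q, q1); rw [hWQ, h]
          exact D2 (G.endpoints_distinct b hbG a haG true true hep).1.symm
        · intro h
          have hep : GArrow.ep b true = GArrow.ep c false := by
            show (W, w2) = (Q, q2); rw [hWQ, h]
          simpa using (G.endpoints_distinct b hbG c hcG true false hep).2
      have s2' : (w1 < q1 ∧ w1 < q2) ∨ (q1 < w1 ∧ q2 < w1) := by
        refine sep_of (adjQ.2 c hcG true hWQ) ?_ ?_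
        · intro h
          have hep : GArrow.ep c true = GArrow.ep a true := by
            show (W, w1) = (Q, q1); rw [hWQ, h]
          exact D1 (G.endpoints_distinct c hcG a haG true true hep).1.symm
        · intro h
          have hep : GArrow.ep c true = GArrow.ep c false := by
            show (W, w1) = (Q, q2); rw [hWQ, h]
          simpa using (G.endpoints_distinct c hcG c hcG true false hep).2
      have s3' : (q1 < w1 ∧ q1 < w2) ∨ (w1 < q1 ∧ w2 < q1) := by
        refine sep_of (adjW.2 a haG true hWQ.symm) ?_ ?_
        · intro h
          have hep : GArrow.ep a true = GArrow.ep c true := by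
            show (Q, q1) = (W, w1); rw [hWQ, h]
          exact D1 (G.endpoints_distinct a haG c hcG true true hep).1
        · intro h
          have hep : GArrow.ep a true = GArrow.ep b true := by
            show (Q, q1) = (W, w2); rw [hWQ, h]
          exact D2 (G.endpoints_distinct a haG b hbG true true hep).1
      exact cross_iff s1' s2' (s3'.imp And.symm And.symm)
    · intro r hr hWr
      rcases (hsepW r (hR hr)).2 hWr.symm with ⟨h1, h2⟩ | ⟨h1, h2⟩
      · exact ⟨iff_of_false (lt_asymm h2) (lt_asymm h1), iff_of_true h2 h1⟩
      · exact ⟨iff_of_true h2 h1, iff_of_false (lt_asymm h2) (lt_asymm h1)⟩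
  -- decomposition of the two diagrams
  have hc_mem2 : c ∈ (G.arrows.erase a).erase b :=
    Finset.mem_erase.2 ⟨fun h => D3 h.symm, Finset.mem_erase.2 ⟨fun h => D1 h.symm, hcG⟩⟩
  have hb_mem1 : b ∈ G.arrows.erase a := Finset.mem_erase.2 ⟨fun h => D2 h.symm, hbG⟩
  have hGeq : G.arrows = insert a (insert b (insert c common)) := by
    rw [hcom_def, Finset.insert_erase hc_mem2, Finset.insert_erase hb_mem1,
      Finset.insert_erase haG]
  have hG'eq : G'.arrows = insert a' (insert b' (insert c' common)) := by
    rw [hG']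
    ext x
    simp only [Finset.mem_union, Finset.mem_insert, Finset.mem_singleton]
    tauto
  have hnb : b ∉ insert c common := fun hm =>
    (Finset.mem_insert.1 hm).elim (fun h => D3 h) (fun h => hbcom h)
  have hna : a ∉ insert b (insert c common) := fun hm =>
    (Finset.mem_insert.1 hm).elim (fun h => D2 h)
      (fun hm2 => (Finset.mem_insert.1 hm2).elim (fun h => D1 h) hacom)
  have hnb' : b' ∉ insert c' common := fun hm =>
    (Finset.mem_insert.1 hm).elim (fun h => D6 h) (fun h => hb'com h)
  have hna' : a' ∉ insert b' (insert c' common) := fun hm =>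
    (Finset.mem_insert.1 hm).elim (fun h => D4 h)
      (fun hm2 => (Finset.mem_insert.1 hm2).elim (fun h => D5 h) ha'com)
  have hZ : ∀ (Gd : GaussDiagram n), Z I j Gd = ∑ S ∈ Gd.arrows.powerset, wt I j S :=
    fun _ => rfl
  rw [hZ G, hZ G', hGeq, hG'eq,
    Finset.sum_powerset_insert hna, Finset.sum_powerset_insert hnb,
    Finset.sum_powerset_insert hnb, Finset.sum_powerset_insert hccom,
    Finset.sum_powerset_insert hccom, Finset.sum_powerset_insert hccom,
    Finset.sum_powerset_insert hccom,
    Finset.sum_powerset_insert hna', Finset.sum_powerset_insert hnb',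
    Finset.sum_powerset_insert hnb', Finset.sum_powerset_insert hc'com,
    Finset.sum_powerset_insert hc'com, Finset.sum_powerset_insert hc'com,
    Finset.sum_powerset_insert hc'com]
  simp only [← Finset.sum_add_distrib]
  refine Finset.sum_congr rfl ?_
  intro R hRp
  have hR := Finset.mem_powerset.1 hRp
  have z1 : wt I j (insert a (insert b R)) = 0 :=
    wt_eq_zero_of_dup (x := a) (y := b) (Finset.mem_insert_self _ _)
      (Finset.mem_insert_of_mem (Finset.mem_insert_self _ _)) D2 rfl
  have z2 : wt I j (insert a (insert b (insert c R))) = 0 :=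
    wt_eq_zero_of_dup (x := a) (y := b) (Finset.mem_insert_self _ _)
      (Finset.mem_insert_of_mem (Finset.mem_insert_self _ _)) D2 rfl
  have z1' : wt I j (insert a' (insert b' R)) = 0 :=
    wt_eq_zero_of_dup (x := a') (y := b') (Finset.mem_insert_self _ _)
      (Finset.mem_insert_of_mem (Finset.mem_insert_self _ _)) D4 rfl
  have z2' : wt I j (insert a' (insert b' (insert c' R))) = 0 :=
    wt_eq_zero_of_dup (x := a') (y := b') (Finset.mem_insert_self _ _)
      (Finset.mem_insert_of_mem (Finset.mem_insert_self _ _)) D4 rfl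
  have m := master (P := P) (Q := Q) (W := W) (p1 := p1) (p2 := p2) (q1 := q1) (q2 := q2)
    (w1 := w1) (w2 := w2) (sb := sb) (st := st) (sbt := sbt) (R := R) hjI
    (fun r hr => hsepP r (hR hr)) (fun r hr => hsepQ r (hR hr))
    (fun r hr => hsepW r (hR hr)) adjQ.1 adjW.1 hsb hmix
  simp only [Spair] at m
  have s1 := S1 R hRp
  have s2 := S2 R hRp
  have s3 := S3 R hRp
  linarith


end Assembly
lemma adj_symm {n : ℕ} {G : GaussDiagram n} {s : Fin n} {p q : ℚ}
    (h : IsAdjacentPair G s p q) : IsAdjacentPair G s q p := by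
  refine ⟨h.1.symm, ?_⟩
  intro c hc t ht hlt
  refine h.2 c hc t ht ⟨?_, ?_⟩
  · rw [min_comm]; exact hlt.1
  · rw [max_comm]; exact hlt.2


end Om3


/-- **Invariance under the third Reidemeister move.**  If `G` and `G'` are
Gauss diagrams on `n` strings related by a third Reidemeister move `Ω3`
(simultaneous transposition of the two adjacent endpoints on each of three
string fragments carrying the six endpoints of three arrows joining the
fragments pairwise, preserving directions and signs, in a configuration arising
from the oriented third Reidemeister move on tangle diagrams), then
`Z_{I,j}(G) = Z_{I,j}(G')` for every `I ⊆ {1,…,n}` and every `j ∉ I`. -/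
theorem omega3_invariance {n : ℕ} (G G' : GaussDiagram n)
    (h : Omega3Rel G G') :
    ∀ (I : Finset (Fin n)) (j : Fin n), j ∉ I → Z I j G = Z I j G' := by
  classical
  obtain ⟨sX, sY, sZ, xa, xb, ya, yc, zb, zc, u, w, ox, oy, oz,
    hA, hB, hC, hox, hoy, hoz, adjX, adjY, adjZ, hGG'⟩ := h
  cases u
  · cases w
    · -- u = false, w = false
      simp only [mkDirArrow, Bool.false_eq_true, if_false] at hA hB hC hGG'
      have hmix : (-(bsign false * bsign oy * bsign oz)) * (-(bsign false * bsign ox * bsign oz))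
          = if yc < ya then (if xa < xb then (-1 : ℤ) else 1)
            else (if xa < xb then 1 else -1) := by
        rcases ox <;> rcases oy <;> rcases oz <;>
          simp only [Bool.false_eq_true, if_false, if_true] at hox hoy hoz <;>
          (first | rw [if_pos hoy] | rw [if_neg (lt_asymm hoy)]) <;>
          (first | rw [if_pos hox] | rw [if_neg (lt_asymm hox)]) <;>
          norm_num [bsign]
      refine Om3.omega3_abstract G G' sZ sY sX zc zb yc ya xa xb
        (-(bsign false * bsign oy * bsign oz)) (bsign false * bsign ox * bsign oy)
        (-(bsign false * bsign ox * bsign oz))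
        hC hB hA (Om3.adj_symm adjZ) (Om3.adj_symm adjY) adjX hmix ?_
      rw [hGG']
      all_goals
        ext x
        simp only [Finset.mem_union, Finset.mem_insert, Finset.mem_singleton, Finset.mem_erase]
        tauto
    · -- u = false, w = true
      simp only [mkDirArrow, Bool.false_eq_true, if_false, if_true] at hA hB hC hGG'
      have hmix : (-(bsign true * bsign oy * bsign oz)) * (bsign false * bsign ox * bsign oy)
          = if zc < zb then (if xb < xa then (-1 : ℤ) else 1)
            else (if xb < xa then 1 else -1) := by
        rcases ox <;> rcases oy <;> rcases oz <;>
          simp only [Bool.false_eq_true, if_false, if_true] at hox hoy hoz <;>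
          (first | rw [if_pos hoz] | rw [if_neg (lt_asymm hoz)]) <;>
          (first | rw [if_pos hox] | rw [if_neg (lt_asymm hox)]) <;>
          norm_num [bsign]
      refine Om3.omega3_abstract G G' sY sZ sX yc ya zc zb xb xa
        (-(bsign true * bsign oy * bsign oz)) (-(bsign false * bsign ox * bsign oz))
        (bsign false * bsign ox * bsign oy)
        hC hA hB (Om3.adj_symm adjY) (Om3.adj_symm adjZ) (Om3.adj_symm adjX) hmix ?_
      rw [hGG']
      all_goals
        ext x
        simp only [Finset.mem_union, Finset.mem_insert, Finset.mem_singleton, Finset.mem_erase]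
        tauto
  · cases w
    · -- u = true, w = false
      simp only [mkDirArrow, Bool.false_eq_true, if_false, if_true] at hA hB hC hGG'
      have hmix : (-(bsign true * bsign ox * bsign oz)) * (bsign true * bsign ox * bsign oy)
          = if zb < zc then (if yc < ya then (-1 : ℤ) else 1)
            else (if yc < ya then 1 else -1) := by
        rcases ox <;> rcases oy <;> rcases oz <;>
          simp only [Bool.false_eq_true, if_false, if_true] at hox hoy hoz <;>
          (first | rw [if_pos hoz] | rw [if_neg (lt_asymm hoz)]) <;>
          (first | rw [if_pos hoy] | rw [if_neg (lt_asymm hoy)]) <;>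
          norm_num [bsign]
      refine Om3.omega3_abstract G G' sX sZ sY xb xa zb zc yc ya
        (-(bsign true * bsign ox * bsign oz)) (-(bsign false * bsign oy * bsign oz))
        (bsign true * bsign ox * bsign oy)
        hB hA hC (Om3.adj_symm adjX) adjZ (Om3.adj_symm adjY) hmix ?_
      rw [hGG']
      all_goals
        ext x
        simp only [Finset.mem_union, Finset.mem_insert, Finset.mem_singleton, Finset.mem_erase]
        tauto
    · -- u = true, w = true
      simp only [mkDirArrow, if_true] at hA hB hC hGG'
      have hmix : (bsign true * bsign ox * bsign oy) * (-(bsign true * bsign ox * bsign oz))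
          = if ya < yc then (if zc < zb then (-1 : ℤ) else 1)
            else (if zc < zb then 1 else -1) := by
        rcases ox <;> rcases oy <;> rcases oz <;>
          simp only [Bool.false_eq_true, if_false, if_true] at hox hoy hoz <;>
          (first | rw [if_pos hoy] | rw [if_neg (lt_asymm hoy)]) <;>
          (first | rw [if_pos hoz] | rw [if_neg (lt_asymm hoz)]) <;>
          norm_num [bsign]
      refine Om3.omega3_abstract G G' sX sY sZ xa xb ya yc zc zb
        (bsign true * bsign ox * bsign oy) (-(bsign true * bsign oy * bsign oz))
        (-(bsign true * bsign ox * bsign oz))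
        hA hB hC adjX adjY (Om3.adj_symm adjZ) hmix ?_
      rw [hGG']
      all_goals
        ext x
        simp only [Finset.mem_union, Finset.mem_insert, Finset.mem_singleton, Finset.mem_erase]
        tauto
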